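/- arXiv:1901.05328 — 4 statements merged into one kernel-verified Lean document; each statement's English description precedes it below -/
import Mathlib

section
/- Define f(t) = ∑_{j=0}^{∞} t^{2j}(1+t) q^{2j²} (tzq;q²)_j (tq/z;q²)_j / (t²;q²)_{2j+1} as a formal power series in t. Then f satisfies the functional equation f(t) = 1/(1-t) + [t² q² (1-tzq)(1-tq/z)] / [(1-t²q²)(1+tq²)(1-t)] · f(tq²). -/
open Finset PowerSeries

/-- The `j`-th term of the series
`f(t) = ∑_j t^{2j}(1+t) q^{2j²} (tzq;q²)_j (tq/z;q²)_j / (t²;q²)_{2j+1}`,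
as a formal power series in `t` over the field `K` (think of `K = ℚ(z,q)`). -/
noncomputable def fTerm {K : Type*} [Field K] (z q : K) (j : ℕ) : PowerSeries K :=
  (PowerSeries.X : PowerSeries K) ^ (2*j) * (1 + PowerSeries.X)
    * PowerSeries.C (q ^ (2*j^2))
    * (∏ k ∈ range j, (1 - PowerSeries.X * PowerSeries.C (z * q ^ (2*k+1))))
    * (∏ k ∈ range j, (1 - PowerSeries.X * PowerSeries.C (q ^ (2*k+1) / z)))
    * (∏ k ∈ range (2*j+1), (1 - PowerSeries.X ^ 2 * PowerSeries.C (q ^ (2*k))))⁻¹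

/-- `P n = P_n(z,q)`, the coefficient of `t^n` in `f(t)`.  Since the `j`-th term of
`f` is divisible by `t^{2j}`, only the terms with `j ≤ n` contribute to the
coefficient of `t^n`, so the truncated finite sum gives the honest coefficient. -/
noncomputable def fCoeff {K : Type*} [Field K] (z q : K) (n : ℕ) : K :=
  PowerSeries.coeff n (∑ j ∈ range (n+1), fTerm z q j)

section Aux
variable {K : Type*} [Field K]

lemma rescale_C' (a b : K) : rescale a (C b) = C b := by
  ext n
  rw [coeff_rescale]
  simp only [coeff_C]
  split_ifs with h
  · subst h; simp
  · simp

lemma rescale_inv' (a : K) (f : PowerSeries K) (hf : constantCoeff f ≠ 0) :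
    rescale a f⁻¹ = (rescale a f)⁻¹ := by
  have h : constantCoeff (rescale a f) ≠ 0 := by
    rwa [← coeff_zero_eq_constantCoeff_apply, coeff_rescale, pow_zero, one_mul,
      coeff_zero_eq_constantCoeff_apply]
  rw [eq_inv_iff_mul_eq_one h, ← map_mul, PowerSeries.inv_mul_cancel f hf, map_one]

lemma rescale_lin (a c : K) : rescale a (1 - X * C c) = 1 - X * C (c * a) := by
  rw [map_sub, map_one, map_mul, rescale_X, rescale_C', mul_comm (C a) X, mul_assoc,
    ← map_mul, mul_comm a c]

lemma rescale_quad (a c : K) : rescale a (1 - X^2 * C c) = 1 - X^2 * C (c * a^2) := by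
  rw [map_sub, map_one, map_mul, map_pow, rescale_X, mul_pow, ← map_pow, rescale_C',
    mul_comm (C (a^2)) (X^2), mul_assoc, ← map_mul, mul_comm (a^2) c]

lemma rescale_fTerm (z q : K) (j : ℕ) :
    rescale (q^2) (fTerm z q j) =
      X ^ (2*j) * C (q^(4*j)) * (1 + X * C (q^2)) * C (q^(2*j^2))
        * (∏ k ∈ range j, (1 - X * C (z * q^(2*k+3))))
        * (∏ k ∈ range j, (1 - X * C (q^(2*k+3) / z)))
        * (∏ k ∈ range (2*j+1), (1 - X^2 * C (q^(2*k+4))))⁻¹ := by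
  unfold fTerm
  have h1 : rescale (q^2) ((X:PowerSeries K)^(2*j)) = C (q^(4*j)) * X^(2*j) := by
    rw [map_pow, rescale_X, mul_pow, ← map_pow, ← pow_mul]
    have : 2 * (2*j) = 4*j := by ring
    rw [this]
  have h2 : rescale (q^2) (1 + X : PowerSeries K) = 1 + X * C (q^2) := by
    rw [map_add, map_one, rescale_X, mul_comm (C (q^2)) X]
  have h4 : rescale (q^2) (∏ k ∈ range j, (1 - X * C (z * q^(2*k+1))))
      = ∏ k ∈ range j, (1 - X * C (z * q^(2*k+3))) := by
    rw [map_prod]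
    refine Finset.prod_congr rfl fun k _ => ?_
    rw [rescale_lin]
    congr 2
    rw [mul_assoc, ← pow_add]
  have h5 : rescale (q^2) (∏ k ∈ range j, (1 - X * C (q^(2*k+1) / z)))
      = ∏ k ∈ range j, (1 - X * C (q^(2*k+3) / z)) := by
    rw [map_prod]
    refine Finset.prod_congr rfl fun k _ => ?_
    rw [rescale_lin]
    congr 2
    rw [div_mul_eq_mul_div, ← pow_add]
  have h6 : rescale (q^2) (∏ k ∈ range (2*j+1), (1 - X^2 * C (q^(2*k))))
      = ∏ k ∈ range (2*j+1), (1 - X^2 * C (q^(2*k+4))) := by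
    rw [map_prod]
    refine Finset.prod_congr rfl fun k _ => ?_
    rw [rescale_quad]
    congr 2
    rw [← pow_mul, ← pow_add]
  rw [map_mul, map_mul, map_mul, map_mul, map_mul,
    rescale_inv' _ _ (by simp [map_prod]), h1, h2, rescale_C', h4, h5, h6]
  ring

lemma mul_inv_mul_mul_inv (a b c d : PowerSeries K) :
    a * b⁻¹ * (c * d⁻¹) = (a * c) * (b * d)⁻¹ := by
  rw [PowerSeries.mul_inv_rev]; ring

lemma div_div_eq (a b c d : PowerSeries K) (hb : constantCoeff b ≠ 0)
    (hd : constantCoeff d ≠ 0) (h : a * d = c * b) : a * b⁻¹ = c * d⁻¹ := by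
  have hbd : b * d ≠ 0 := by
    intro h0
    have h1 : constantCoeff (b * d) ≠ 0 := by rw [map_mul]; exact mul_ne_zero hb hd
    exact h1 (by rw [h0, map_zero])
  apply mul_right_cancel₀ hbd
  calc a * b⁻¹ * (b * d) = a * d * (b⁻¹ * b) := by ring
    _ = a * d := by rw [PowerSeries.inv_mul_cancel b hb, mul_one]
    _ = c * b := h
    _ = c * d⁻¹ * (b * d) := by rw [mul_comm b d, ← mul_assoc, mul_assoc c d⁻¹ d,
          PowerSeries.inv_mul_cancel d hd, mul_one]

lemma fTerm_succ (z q : K) (j : ℕ) :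
    fTerm z q (j+1)
      = (X^2 * C (q^2) * (1 - X * C (z*q)) * (1 - X * C (q/z)))
        * ((1 - X^2 * C (q^2)) * (1 + X * C (q^2)) * (1 - X))⁻¹
        * rescale (q^2) (fTerm z q j) := by
  have n1 : (X:PowerSeries K)^(2*(j+1)) = X^(2*j) * X^2 := by
    rw [show 2*(j+1) = 2*j+2 from by ring, pow_add]
  have n2 : C (q^(2*(j+1)^2)) = C (q^(2*j^2)) * C (q^(4*j)) * C (q^2) := by
    rw [← map_mul, ← map_mul, ← pow_add, ← pow_add,
      show 2*j^2 + 4*j + 2 = 2*(j+1)^2 from by ring]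
  have n3 : ∏ k ∈ range (j+1), (1 - X * C (z*q^(2*k+1)))
      = (∏ k ∈ range j, (1 - X * C (z*q^(2*k+3)))) * (1 - X * C (z*q)) := by
    rw [prod_range_succ']
    have e : ∀ k:ℕ, 2*(k+1)+1 = 2*k+3 := fun k => by ring
    simp_rw [e]
    norm_num
  have n4 : ∏ k ∈ range (j+1), (1 - X * C (q^(2*k+1)/z))
      = (∏ k ∈ range j, (1 - X * C (q^(2*k+3)/z))) * (1 - X * C (q/z)) := by
    rw [prod_range_succ']
    have e : ∀ k:ℕ, 2*(k+1)+1 = 2*k+3 := fun k => by ring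
    simp_rw [e]
    norm_num
  have n5 : ∏ k ∈ range (2*(j+1)+1), (1 - X^2 * C (q^(2*k)))
      = (∏ k ∈ range (2*j+1), (1 - X^2 * C (q^(2*k+4))))
          * (1 - X^2 * C (q^2)) * (1 - X^2) := by
    have e0 : 2*(j+1)+1 = (2*j+1)+1+1 := by ring
    rw [e0, prod_range_succ', prod_range_succ']
    have e : ∀ k:ℕ, 2*(k+1+1) = 2*k+4 := fun k => by ring
    simp_rw [e]
    norm_num
  rw [rescale_fTerm, mul_inv_mul_mul_inv]
  unfold fTerm
  rw [n1, n2, n3, n4, n5]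
  refine div_div_eq _ _ _ _ ?_ ?_ ?_
  · simp [map_prod]
  · simp [map_prod]
  · ring

lemma fTerm_zero (z q : K) : fTerm z q 0 = (1 - X : PowerSeries K)⁻¹ := by
  unfold fTerm
  simp
  have : (1 + X) * (1 - X^2 : PowerSeries K)⁻¹ = 1 * (1 - X)⁻¹ := by
    refine div_div_eq _ _ _ _ ?_ ?_ ?_
    · simp
    · simp
    · ring
  rw [this, one_mul]

lemma fTerm_coeff_zero (z q : K) {j n : ℕ} (h : n < 2*j) : coeff n (fTerm z q j) = 0 := by
  have : (X:PowerSeries K)^(2*j) ∣ fTerm z q j := by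
    unfold fTerm
    exact ((((dvd_mul_right _ _).mul_right _).mul_right _).mul_right _).mul_right _
  exact X_pow_dvd_iff.mp this n h

lemma fCoeff_eq (z q : K) {n N : ℕ} (h : n < N) :
    fCoeff z q n = coeff n (∑ j ∈ range N, fTerm z q j) := by
  unfold fCoeff
  rw [map_sum, map_sum]
  refine Finset.sum_subset (range_subset_range.mpr h) fun j hj hj' => ?_
  refine fTerm_coeff_zero z q ?_
  simp only [mem_range, not_lt] at hj'
  omega

end Aux

/-- The generating function `f(t)` satisfies the functional equation
`f(t) = 1/(1-t) + [t²q²(1-tzq)(1-tq/z)]/[(1-t²q²)(1+tq²)(1-t)] · f(tq²)`. -/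
theorem f_functional_equation {K : Type*} [Field K] (z q : K) (hz : z ≠ 0) :
    (PowerSeries.mk (fCoeff z q) : PowerSeries K) =
      (1 - PowerSeries.X)⁻¹ +
        (PowerSeries.X ^ 2 * PowerSeries.C (q ^ 2)
            * (1 - PowerSeries.X * PowerSeries.C (z * q))
            * (1 - PowerSeries.X * PowerSeries.C (q / z)))
          * ((1 - PowerSeries.X ^ 2 * PowerSeries.C (q ^ 2))
              * (1 + PowerSeries.X * PowerSeries.C (q ^ 2))
              * (1 - PowerSeries.X))⁻¹
          * PowerSeries.rescale (q ^ 2) (PowerSeries.mk (fCoeff z q)) := by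

  ext n
  rw [coeff_mk, map_add]
  set R : PowerSeries K := (X ^ 2 * C (q ^ 2) * (1 - X * C (z * q)) * (1 - X * C (q / z)))
      * ((1 - X ^ 2 * C (q ^ 2)) * (1 + X * C (q ^ 2)) * (1 - X))⁻¹ with hR
  have step1 : coeff n (R * rescale (q^2) (mk (fCoeff z q)))
      = coeff n (R * rescale (q^2) (∑ j ∈ range (n+1), fTerm z q j)) := by
    rw [coeff_mul, coeff_mul]
    refine Finset.sum_congr rfl fun p hp => ?_
    rw [Finset.HasAntidiagonal.mem_antidiagonal] at hp
    congr 1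
    rw [coeff_rescale, coeff_rescale, coeff_mk, fCoeff_eq z q (show p.2 < n+1 by omega)]
  have step2 : (1 - X : PowerSeries K)⁻¹ + R * rescale (q^2) (∑ j ∈ range (n+1), fTerm z q j)
      = ∑ j ∈ range (n+2), fTerm z q j := by
    rw [map_sum, mul_sum]
    have : ∀ j, R * rescale (q^2) (fTerm z q j) = fTerm z q (j+1) := by
      intro j
      rw [hR, fTerm_succ]
    simp_rw [this]
    rw [sum_range_succ' _ (n+1), fTerm_zero, add_comm]
  rw [step1, ← map_add, step2]
  exact fCoeff_eq z q (by omega)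
end

section
/- For every n ≥ 0, the coefficient P_n(z,q) of t^n in f(t) = ∑_{j=0}^{∞} t^{2j}(1+t) q^{2j²} (tzq;q²)_j (tq/z;q²)_j / (t²;q²)_{2j+1} equals the triple sum ∑_{j=0}^{⌊n/2⌋} ∑_{h=0}^{j} ∑_{i=0}^{j} (-1)^{h+i} z^{h-i} q^{h²+i²+2j²} qbinom(j,h;q²) qbinom(j,i;q²) qbinom(j + ⌊(n-h-i)/2⌋, 2j; q²). -/
open Finset PowerSeries

/-- The Gaussian binomial coefficient `[n choose k]_q`. -/
def gb {K : Type*} [CommRing K] (q : K) : ℕ → ℕ → K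
  | _, 0 => 1
  | 0, _+1 => 0
  | n+1, k+1 => gb q n k + q ^ (k+1) * gb q n (k+1)

lemma gb_zero {K : Type*} [CommRing K] (q : K) (n : ℕ) : gb q n 0 = 1 := by
  cases n <;> rfl

lemma gb_succ {K : Type*} [CommRing K] (q : K) (n k : ℕ) :
    gb q (n+1) (k+1) = gb q n k + q ^ (k+1) * gb q n (k+1) := rfl

lemma gb_eq_zero {K : Type*} [CommRing K] (q : K) {n k : ℕ} (h : n < k) : gb q n k = 0 := by
  induction n generalizing k with
  | zero => cases k with
    | zero => omega
    | succ k => rfl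
  | succ n ih =>
    cases k with
    | zero => omega
    | succ k => rw [gb_succ, ih (by omega), ih (by omega)]; ring

lemma coeff_prod_one_sub {K : Type*} [Field K] (q : K) (j : ℕ) (a : K) (h : ℕ) :
    PowerSeries.coeff h (∏ k ∈ range j, (1 - PowerSeries.X * PowerSeries.C (a * q ^ (2*k)))) =
      (-1 : K)^h * gb (q^2) j h * a^h * q^(h*(h-1)) := by
  induction j generalizing a h with
  | zero =>
    simp only [range_zero, prod_empty, PowerSeries.coeff_one]
    cases h with
    | zero => simp [gb_zero]
    | succ h => rw [gb_eq_zero (q^2) (by omega : 0 < h+1)]; simp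
  | succ j ih =>
    rw [Finset.prod_range_succ']
    have hcong : ∀ k ∈ range j,
        (1 - PowerSeries.X * PowerSeries.C (a * q ^ (2*(k+1)))) =
        (1 - PowerSeries.X * PowerSeries.C ((a * q^2) * q ^ (2*k))) := by
      intro k _
      congr 2
      ring
    rw [Finset.prod_congr rfl hcong]
    set G := ∏ k ∈ range j, (1 - PowerSeries.X * PowerSeries.C ((a * q^2) * q ^ (2*k))) with hG
    have expand : G * (1 - PowerSeries.X * PowerSeries.C (a * q ^ (2*0)))
        = G - (G * PowerSeries.X) * PowerSeries.C a := by
      simp only [mul_zero, pow_zero, mul_one]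
      ring
    rw [expand, map_sub, PowerSeries.coeff_mul_C]
    cases h with
    | zero =>
      rw [PowerSeries.coeff_zero_mul_X, ih]
      simp [gb_zero]
    | succ h =>
      rw [PowerSeries.coeff_succ_mul_X, ih, ih, gb_succ]
      simp only [Nat.add_sub_cancel]
      rw [show (h+1)*h = h*(h-1)+2*h by
        cases h with
        | zero => rfl
        | succ n => simp only [Nat.succ_sub_one]; ring]
      rw [pow_add]
      ring

lemma gb_self {K : Type*} [CommRing K] (q : K) (n : ℕ) : gb q n n = 1 := by
  induction n with
  | zero => rfl
  | succ n ih => rw [gb_succ, ih, gb_eq_zero q (by omega : n < n+1)]; ring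

noncomputable def Sgen {K : Type*} [Field K] (q : K) (r : ℕ) : PowerSeries K :=
  PowerSeries.mk fun n => if Even n then gb (q^2) (r + n/2) r else 0

lemma coeff_X_sq_mul {K : Type*} [Field K] (φ : PowerSeries K) (n : ℕ) :
    PowerSeries.coeff n (PowerSeries.X^2 * φ) =
      if 2 ≤ n then PowerSeries.coeff (n-2) φ else 0 := by
  match n with
  | 0 => simp [PowerSeries.coeff_zero_eq_constantCoeff, map_mul]
  | 1 =>
    rw [show (PowerSeries.X : PowerSeries K)^2 * φ = PowerSeries.X * (PowerSeries.X * φ) by ring,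
      PowerSeries.coeff_succ_X_mul, show PowerSeries.X * φ = φ * PowerSeries.X by ring,
      PowerSeries.coeff_zero_mul_X]
    simp
  | (m+2) =>
    rw [PowerSeries.coeff_X_pow_mul φ 2 m]
    simp

lemma step_Sgen {K : Type*} [Field K] (q : K) (r : ℕ) :
    (1 - PowerSeries.X^2 * PowerSeries.C (q^(2*(r+1)))) * Sgen q (r+1) = Sgen q r := by
  ext n
  rw [show (1 - PowerSeries.X^2 * PowerSeries.C (q^(2*(r+1)))) * Sgen q (r+1)
      = Sgen q (r+1) - PowerSeries.X^2 * (PowerSeries.C (q^(2*(r+1))) * Sgen q (r+1)) by ring,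
    map_sub, coeff_X_sq_mul]
  simp only [Sgen, PowerSeries.coeff_mk, map_mul, PowerSeries.coeff_C_mul]
  by_cases hn : Even n
  · by_cases h2 : 2 ≤ n
    · have hm : Even (n-2) := by
        obtain ⟨t, ht⟩ := hn; exact ⟨t-1, by omega⟩
      simp only [if_pos hn, if_pos h2, if_pos hm]
      have hdiv : n / 2 = (n-2)/2 + 1 := by omega
      rw [hdiv]
      rw [show r + 1 + ((n-2)/2 + 1) = (r + (n-2)/2 + 1) + 1 by ring, gb_succ]
      rw [show r + (n-2)/2 + 1 = r + 1 + (n-2)/2 by ring]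
      rw [show q^(2*(r+1)) = (q^2)^(r+1) by rw [pow_mul]]
      ring
    · interval_cases n
      · simp [gb_self]
      · simp at hn
  · have : ¬ Even (n - 2) ∨ ¬ 2 ≤ n := by
      by_cases h2 : 2 ≤ n
      · left; intro ⟨t, ht⟩; exact hn ⟨t+1, by omega⟩
      · right; exact h2
    simp only [if_neg hn]
    rcases this with h | h
    · simp [if_neg h]
    · simp [if_neg h]

lemma prod_mul_Sgen {K : Type*} [Field K] (q : K) (r : ℕ) :
    (∏ k ∈ range (r+1), (1 - PowerSeries.X^2 * PowerSeries.C (q^(2*k)))) * Sgen q r = 1 := by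
  induction r with
  | zero =>
    ext n
    simp only [zero_add, Nat.zero_add, range_one, prod_singleton, mul_zero, pow_zero, map_one, mul_one, map_pow,
      Nat.mul_zero]
    rw [show (1 - PowerSeries.X^2 : PowerSeries K) * Sgen q 0
        = Sgen q 0 - PowerSeries.X^2 * Sgen q 0 by ring, map_sub, coeff_X_sq_mul]
    simp only [Sgen, PowerSeries.coeff_mk, gb_zero, PowerSeries.coeff_one]
    by_cases hn : Even n
    · by_cases h2 : 2 ≤ n
      · have hm : Even (n-2) := by obtain ⟨t, ht⟩ := hn; exact ⟨t-1, by omega⟩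
        have hne : n ≠ 0 := by omega
        simp [if_pos hn, if_pos h2, if_pos hm, if_neg hne]
      · interval_cases n
        · simp
        · simp at hn
    · have h1 : n ≠ 0 := by rintro rfl; exact hn ⟨0, rfl⟩
      by_cases h2 : 2 ≤ n
      · have hm : ¬ Even (n-2) := by intro ⟨t, ht⟩; exact hn ⟨t+1, by omega⟩
        simp [if_neg hn, if_pos h2, if_neg hm, if_neg h1]
      · simp [if_neg hn, if_neg h2, if_neg h1]
  | succ r ih =>
    rw [Finset.prod_range_succ, mul_assoc, step_Sgen, ih]

lemma inv_prod_eq_Sgen {K : Type*} [Field K] (q : K) (j : ℕ) :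
    (∏ k ∈ range (2*j+1), (1 - PowerSeries.X^2 * PowerSeries.C (q^(2*k))))⁻¹
      = Sgen q (2*j) := by
  rw [eq_comm, PowerSeries.eq_inv_iff_mul_eq_one]
  · rw [mul_comm]; exact prod_mul_Sgen q (2*j)
  · have : (PowerSeries.constantCoeff)
        (∏ k ∈ range (2*j+1), (1 - PowerSeries.X^2 * PowerSeries.C (q^(2*k)))) = 1 := by
      rw [map_prod]
      simp [map_sub, map_mul, map_pow]
    rw [this]; exact one_ne_zero

lemma sum_trunc {K : Type*} [CommRing K] (f g : ℕ → K) (j l : ℕ)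
    (hf : ∀ i, j < i → f i = 0) :
    ∑ i ∈ range (l+1), f i * g i = ∑ i ∈ range (j+1), if i ≤ l then f i * g i else 0 := by
  have h1 : ∑ i ∈ range (l+1), f i * g i
      = ∑ i ∈ range (l+1), (if i ≤ l then f i * g i else 0) := by
    apply Finset.sum_congr rfl; intro i hi
    rw [if_pos (by simpa [Nat.lt_succ_iff] using hi)]
  rw [h1]
  rcases le_total l j with h | h
  · apply Finset.sum_subset (Finset.range_subset_range.mpr (by omega))
    intro x _ hx
    simp only [mem_range] at hx
    rw [if_neg (by omega)]
  · symm
    apply Finset.sum_subset (Finset.range_subset_range.mpr (by omega))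
    intro x _ hx
    simp only [mem_range] at hx
    by_cases hc : x ≤ l
    · rw [if_pos hc, hf x (by omega), zero_mul]
    · rw [if_neg hc]

noncomputable def Emk {K : Type*} [Field K] (q : K) (j : ℕ) : PowerSeries K :=
  PowerSeries.mk fun k => gb (q^2) (2*j + k/2) (2*j)

lemma one_add_X_mul_Sgen {K : Type*} [Field K] (q : K) (j : ℕ) :
    (1 + PowerSeries.X) * Sgen q (2*j) = Emk q j := by
  ext k
  rw [show (1 + PowerSeries.X) * Sgen q (2*j)
      = Sgen q (2*j) + PowerSeries.X * Sgen q (2*j) by ring, map_add]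
  match k with
  | 0 =>
    rw [show PowerSeries.X * Sgen q (2*j) = Sgen q (2*j) * PowerSeries.X by ring,
      PowerSeries.coeff_zero_mul_X]
    simp [Sgen, Emk]
  | (m+1) =>
    rw [PowerSeries.coeff_succ_X_mul]
    simp only [Sgen, Emk, PowerSeries.coeff_mk]
    by_cases he : Even (m+1)
    · have hm : ¬ Even m := by
        rw [Nat.even_iff] at he ⊢; omega
      rw [if_pos he, if_neg hm, add_zero]
    · have hm : Even m := by
        rw [Nat.even_iff] at he ⊢; omega
      have hd : m/2 = (m+1)/2 := by rw [Nat.even_iff] at hm; omega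
      rw [if_neg he, if_pos hm, hd, zero_add]

lemma coeff_fTerm_zero {K : Type*} [Field K] (z q : K) {n j : ℕ} (hj : n < 2*j) :
    PowerSeries.coeff n (fTerm z q j) = 0 := by
  have hdvd : (PowerSeries.X : PowerSeries K)^(2*j) ∣ fTerm z q j :=
    ⟨(1 + PowerSeries.X) * PowerSeries.C (q ^ (2*j^2))
      * (∏ k ∈ range j, (1 - PowerSeries.X * PowerSeries.C (z * q ^ (2*k+1))))
      * (∏ k ∈ range j, (1 - PowerSeries.X * PowerSeries.C (q ^ (2*k+1) / z)))
      * (∏ k ∈ range (2*j+1), (1 - PowerSeries.X ^ 2 * PowerSeries.C (q ^ (2*k))))⁻¹,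
      by unfold fTerm; ring⟩
  exact PowerSeries.X_pow_dvd_iff.mp hdvd n hj

set_option maxHeartbeats 1600000 in
lemma coeff_fTerm_eq {K : Type*} [Field K] (z q : K) (hz : z ≠ 0) (n j : ℕ) (hj : 2*j ≤ n) :
    PowerSeries.coeff n (fTerm z q j)
      = ∑ h ∈ range (j+1), ∑ i ∈ range (j+1),
        (-1 : K)^(h+i) * z^((h : ℤ) - (i : ℤ)) * q^(h^2 + i^2 + 2*j^2)
          * gb (q^2) j h * gb (q^2) j i * gb (q^2) (j + (n - h - i)/2) (2*j) := by
  have hP1 : (∏ k ∈ range j, (1 - PowerSeries.X * PowerSeries.C (z * q ^ (2*k+1))))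
      = ∏ k ∈ range j, (1 - PowerSeries.X * PowerSeries.C ((z*q) * q ^ (2*k))) :=
    Finset.prod_congr rfl (fun k _ => by congr 2; ring)
  have hP2 : (∏ k ∈ range j, (1 - PowerSeries.X * PowerSeries.C (q ^ (2*k+1) / z)))
      = ∏ k ∈ range j, (1 - PowerSeries.X * PowerSeries.C ((q/z) * q ^ (2*k))) :=
    Finset.prod_congr rfl (fun k _ => by congr 2; ring)
  unfold fTerm
  rw [inv_prod_eq_Sgen, hP1, hP2]
  rw [show ∀ (A B S : PowerSeries K),
      PowerSeries.X^(2*j) * (1 + PowerSeries.X) * PowerSeries.C (q^(2*j^2)) * A * B * S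
      = PowerSeries.C (q^(2*j^2))
        * (PowerSeries.X^(2*j) * (A * (B * ((1 + PowerSeries.X) * S))))
      from fun _ _ _ => by ring]
  rw [one_add_X_mul_Sgen, PowerSeries.coeff_C_mul]
  set A := ∏ k ∈ range j, (1 - PowerSeries.X * PowerSeries.C ((z*q) * q ^ (2*k))) with hA
  set B := ∏ k ∈ range j, (1 - PowerSeries.X * PowerSeries.C ((q/z) * q ^ (2*k))) with hB
  have hshift := PowerSeries.coeff_X_pow_mul (A * (B * Emk q j)) (2*j) (n - 2*j)
  rw [show (n-2*j)+2*j = n by omega] at hshift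
  rw [hshift]
  set m := n - 2*j with hm
  rw [PowerSeries.coeff_mul, Finset.Nat.sum_antidiagonal_eq_sum_range_succ_mk]
  dsimp only
  have hazero : ∀ h, j < h → PowerSeries.coeff h A = 0 := fun h hh => by
    rw [hA, coeff_prod_one_sub, gb_eq_zero _ hh]; ring
  have hbzero : ∀ i, j < i → PowerSeries.coeff i B = 0 := fun i hi => by
    rw [hB, coeff_prod_one_sub, gb_eq_zero _ hi]; ring
  rw [sum_trunc (fun h => PowerSeries.coeff h A)
      (fun h => PowerSeries.coeff (m-h) (B * Emk q j)) j m hazero]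
  rw [Finset.mul_sum]
  apply Finset.sum_congr rfl
  intro h hhj
  have hhj' : h ≤ j := by simpa [Nat.lt_succ_iff] using hhj
  by_cases hhm : h ≤ m
  · rw [if_pos hhm]
    rw [PowerSeries.coeff_mul, Finset.Nat.sum_antidiagonal_eq_sum_range_succ_mk]
    dsimp only
    rw [sum_trunc (fun i => PowerSeries.coeff i B)
        (fun i => PowerSeries.coeff (m-h-i) (Emk q j)) j (m-h) hbzero]
    rw [Finset.mul_sum, Finset.mul_sum]
    apply Finset.sum_congr rfl
    intro i hij
    have hij' : i ≤ j := by simpa [Nat.lt_succ_iff] using hij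
    by_cases hi : i ≤ m - h
    · rw [if_pos hi, coeff_prod_one_sub, coeff_prod_one_sub]
      simp only [Emk, PowerSeries.coeff_mk]
      have harg : 2*j + (m-h-i)/2 = j + (n-h-i)/2 := by omega
      rw [harg]
      have e1 : h + h*(h-1) = h^2 := by
        cases h with
        | zero => rfl
        | succ t => simp only [Nat.succ_sub_one]; ring
      have e2 : i + i*(i-1) = i^2 := by
        cases i with
        | zero => rfl
        | succ t => simp only [Nat.succ_sub_one]; ring
      rw [zpow_sub₀ hz, zpow_natCast, zpow_natCast]
      rw [show h^2 + i^2 + 2*j^2 = (h + h*(h-1)) + (i + i*(i-1)) + 2*j^2 by rw [e1, e2]]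
      simp only [pow_add]
      field_simp
      have hzi : z ^ i * z⁻¹ ^ i = 1 := by rw [← mul_pow, mul_inv_cancel₀ hz, one_pow]
      linear_combination (q ^ (j ^ 2 * 2) * q ^ h * q ^ (h * (h - 1)) * q ^ i * q ^ (i * (i - 1)) * gb (q ^ 2) j h * z ^ h * gb (q ^ 2) j i * gb (q ^ 2) (j + (n - h - i) / 2) (2 * j)) * hzi
    · rw [if_neg hi]
      rw [gb_eq_zero (q^2) (show j + (n-h-i)/2 < 2*j by omega)]
      ring
  · rw [if_neg hhm, mul_zero]
    symm
    apply Finset.sum_eq_zero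
    intro i hij
    have hij' : i ≤ j := by simpa [Nat.lt_succ_iff] using hij
    rw [gb_eq_zero (q^2) (show j + (n-h-i)/2 < 2*j by omega)]
    ring

/-- The coefficient `P_n(z,q)` of `t^n` in `f(t)` equals the triple sum
`∑_{j=0}^{⌊n/2⌋} ∑_{h=0}^{j} ∑_{i=0}^{j} (-1)^{h+i} z^{h-i} q^{h²+i²+2j²}
  [j,h]_{q²} [j,i]_{q²} [j+⌊(n-h-i)/2⌋, 2j]_{q²}`. -/
theorem fCoeff_eq_triple_sum {K : Type*} [Field K] (z q : K) (hz : z ≠ 0) (n : ℕ) :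
    fCoeff z q n =
      ∑ j ∈ range (n/2 + 1), ∑ h ∈ range (j+1), ∑ i ∈ range (j+1),
        (-1 : K)^(h+i) * z^((h : ℤ) - (i : ℤ)) * q^(h^2 + i^2 + 2*j^2)
          * gb (q^2) j h * gb (q^2) j i * gb (q^2) (j + (n - h - i)/2) (2*j) := by
  unfold fCoeff
  rw [map_sum]
  rw [← Finset.sum_subset (Finset.range_subset_range.mpr (by omega : n/2+1 ≤ n+1))
      (fun j _ hj => coeff_fTerm_zero z q (by simp only [mem_range] at hj; omega))]
  apply Finset.sum_congr rfl
  intro j hj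
  exact coeff_fTerm_eq z q hz n j (by simp only [mem_range] at hj; omega)
end

section
/- The sequence Q_n(z,q) defined by Q_n := ∑_{j∈ℤ} (-1)^j z^j q^{3j²} qbinom(n-1, ⌊(n+3j-1)/2⌋; q²) + ε_n(z,q) (with ε_n as in Identity 1) satisfies, for all n ≥ 4, the recurrence Q_n = (1-q²)Q_{n-1} + (2q² + q^{2n-2})Q_{n-2} + (q⁴ - q² - (z+z⁻¹)q^{2n-3})Q_{n-3} + (q^{2n-4} - q⁴)Q_{n-4}. -/
open Finset

/-- The Gaussian binomial coefficient with integer arguments: it vanishes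
unless `0 ≤ B ≤ A`. -/
def gbZ {K : Type*} [CommRing K] (q : K) (A B : ℤ) : K :=
  if 0 ≤ B ∧ B ≤ A then gb q A.toNat B.toNat else 0

/-- The modified Gaussian binomial coefficient: equals `1` when `A = -1` and
`B = 0`, and the ordinary Gaussian binomial coefficient otherwise. -/
def gbS {K : Type*} [CommRing K] (q : K) (A B : ℤ) : K :=
  if A = -1 ∧ B = 0 then 1 else gbZ q A B

/-- The correction term `ε_n(z,q)` of McLaughlin–Sills Identity 1. -/
noncomputable def eps1 {K : Type*} [Field K] (z q : K) (n : ℕ) : K :=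
  if Even n then
    ∑ j ∈ Icc (-(n : ℤ) - 1) ((n : ℤ) + 1),
      z ^ (2*j) * q ^ (12*j^2 + 6*j + (n : ℤ)) * gbS (q^2) ((n : ℤ) - 1) (((n : ℤ) + 6*j)/2)
  else
    - ∑ j ∈ Icc (-(n : ℤ) - 1) ((n : ℤ) + 1),
      z ^ (2*j - 1) * q ^ (12*j^2 - 6*j + (n : ℤ)) * gbS (q^2) ((n : ℤ) - 1) (((n : ℤ) + 6*j - 3)/2)

/-- The right-hand side `Q_n(z,q)` of McLaughlin–Sills Identity 1:
`∑_{j∈ℤ} (-1)^j z^j q^{3j²} [n-1, ⌊(n+3j-1)/2⌋]_{q²} + ε_n(z,q)`.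
All integer sums are finitely supported, so summing `j` over `[-n-1, n+1]`
captures every nonzero term. -/
noncomputable def Q1 {K : Type*} [Field K] (z q : K) (n : ℕ) : K :=
  (∑ j ∈ Icc (-(n : ℤ) - 1) ((n : ℤ) + 1),
    (-1 : K) ^ j * z ^ j * q ^ (3*j^2) * gbZ (q^2) ((n : ℤ) - 1) (Int.fdiv ((n : ℤ) + 3*j - 1) 2))
  + eps1 z q n

/-- The left-hand side `S_n(z,q)` of McLaughlin–Sills Identity 1. -/
noncomputable def S1 {K : Type*} [Field K] (z q : K) (n : ℕ) : K :=
  ∑ j ∈ range (n/2 + 1), ∑ h ∈ range (j+1), ∑ i ∈ range (j+1),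
    (-1 : K)^(h+i) * z^((h : ℤ) - (i : ℤ)) * q^(h^2 + i^2 + 2*j^2)
      * gb (q^2) j h * gb (q^2) j i * gb (q^2) (j + (n - h - i)/2) (2*j)


section GB
variable {K : Type*} [CommRing K] (q : K)

lemma gb_zero_right : ∀ n, gb q n 0 = 1
  | 0 => rfl
  | _+1 => rfl

lemma gb_succ_succ (n k : ℕ) : gb q (n+1) (k+1) = gb q n k + q ^ (k+1) * gb q n (k+1) := by
  rw [gb]

lemma gb_eq_zero_s12 : ∀ n k : ℕ, n < k → gb q n k = 0
  | _, 0, h => absurd h (by omega)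
  | 0, _+1, _ => rfl
  | n+1, k+1, h => by
      rw [gb_succ_succ, gb_eq_zero_s12 n k (by omega), gb_eq_zero_s12 n (k+1) (by omega),
        mul_zero, add_zero]

lemma gb_dual : ∀ n k : ℕ, gb q (n+1) (k+1) = q^(n-k) * gb q n k + gb q n (k+1)
  | 0, k => by
      rw [gb_succ_succ, gb_eq_zero_s12 q 0 (k+1) (by omega), Nat.zero_sub, pow_zero]
      ring
  | n+1, 0 => by
      conv_lhs => rw [gb_succ_succ, gb_dual n 0]
      conv_rhs => rw [gb_succ_succ]
      simp only [gb_zero_right]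
      rw [show n + 1 - 0 = (n-0) + 1 from by omega, pow_succ]
      ring
  | n+1, k+1 => by
      rcases le_or_gt (k+1) n with hk | hk
      · conv_lhs => rw [gb_succ_succ, gb_dual n k, gb_dual n (k+1)]
        conv_rhs => rw [gb_succ_succ, gb_succ_succ]
        rw [show n + 1 - (k+1) = n - k from by omega]
        have h2 : q^(k+1+1) * q^(n-(k+1)) = q^(n-k) * q^(k+1) := by
          rw [← pow_add, ← pow_add]; congr 1; omega
        linear_combination (gb q n (k+1)) * h2
      · rw [gb_succ_succ, gb_eq_zero_s12 q (n+1) (k+1+1) (by omega),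
          show n+1-(k+1) = 0 from by omega]
        ring
end GB

section GBZ
variable {K : Type*} [Field K]

lemma gbZ_pascal1 (q : K) {A : ℤ} (B : ℤ) (hA : 1 ≤ A) :
    gbZ q A B = gbZ q (A-1) (B-1) + q ^ B * gbZ q (A-1) B := by
  unfold gbZ
  rcases lt_trichotomy B 0 with hB | hB | hB
  · rw [if_neg (by omega), if_neg (by omega), if_neg (by omega)]; ring
  · subst hB
    rw [if_pos (by omega), if_neg (by omega), if_pos (by omega)]
    rw [show (0:ℤ).toNat = 0 from rfl, gb_zero_right, gb_zero_right, zpow_zero]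
    ring
  · rcases le_or_gt B A with hBA | hBA
    · have ha : A.toNat = (A-1).toNat + 1 := by omega
      have hb : B.toNat = (B-1).toNat + 1 := by omega
      rw [if_pos (by omega), if_pos (by omega), ha, hb, gb_succ_succ]
      have hq2 : q ^ B = q ^ ((B-1).toNat + 1) := by
        have hBe : B = (((B-1).toNat + 1 : ℕ) : ℤ) := by omega
        conv_lhs => rw [hBe]
        exact zpow_natCast q _
      rcases eq_or_lt_of_le hBA with hEq | hLt
      · rw [if_neg (by omega), gb_eq_zero_s12 q (A-1).toNat ((B-1).toNat + 1) (by omega)]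
        ring
      · rw [if_pos (by omega), hq2]
    · rw [if_neg (by omega), if_neg (by omega), if_neg (by omega)]; ring

lemma gbZ_pascal2 (q : K) {A : ℤ} (B : ℤ) (hA : 1 ≤ A) :
    gbZ q A B = q ^ (A - B) * gbZ q (A-1) (B-1) + gbZ q (A-1) B := by
  unfold gbZ
  rcases lt_trichotomy B 0 with hB | hB | hB
  · rw [if_neg (by omega), if_neg (by omega), if_neg (by omega)]; ring
  · subst hB
    rw [if_pos (by omega), if_neg (by omega), if_pos (by omega)]
    rw [show (0:ℤ).toNat = 0 from rfl, gb_zero_right, gb_zero_right]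
    ring
  · rcases le_or_gt B A with hBA | hBA
    · have ha : A.toNat = (A-1).toNat + 1 := by omega
      have hb : B.toNat = (B-1).toNat + 1 := by omega
      rw [if_pos (by omega), if_pos (by omega), ha, hb, gb_dual]
      have hq2 : q ^ (A - B) = q ^ ((A-1).toNat - (B-1).toNat) := by
        have hBe : A - B = ((((A-1).toNat - (B-1).toNat : ℕ)) : ℤ) := by omega
        conv_lhs => rw [hBe]
        exact zpow_natCast q _
      rcases eq_or_lt_of_le hBA with hEq | hLt
      · rw [if_neg (by omega), gb_eq_zero_s12 q (A-1).toNat ((B-1).toNat + 1) (by omega), hq2]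
      · rw [if_pos (by omega), hq2]
    · rw [if_neg (by omega), if_neg (by omega), if_neg (by omega)]; ring

end GBZ

section Terms
variable {K : Type*} [Field K]

/-- Summand of the even-floor part of the main sum. -/
noncomputable def xt (z q : K) (m k : ℤ) : K :=
  if Even (m + k) then 0
  else (-1 : K)^k * z^k * q^(3*k^2) * gbZ (q^2) (m-1) ((m+3*k-1)/2)

noncomputable def yt (z q : K) (m k : ℤ) : K :=
  if Even (m + k) then (-1 : K)^k * z^k * q^(3*k^2) * gbZ (q^2) (m-1) ((m+3*k-2)/2) else 0

noncomputable def et (z q : K) (m k : ℤ) : K :=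
  if Even (m + k) then (-1 : K)^k * z^k * q^(3*k^2+3*k+m) * gbZ (q^2) (m-1) ((m+3*k)/2) else 0

noncomputable def ft (z q : K) (m k : ℤ) : K :=
  if Even (m + k) then 0
  else (-1 : K)^k * z^k * q^(3*k^2+3*k+m) * gbZ (q^2) (m-1) ((m+3*k-1)/2)

lemma xt_vanish (z q : K) {m k : ℤ} (hm : 0 ≤ m) (hk : m+1 ≤ k ∨ k ≤ -(m+1)) :
    xt z q m k = 0 := by
  unfold xt; split
  · rfl
  · rw [gbZ, if_neg (by omega), mul_zero]

lemma yt_vanish (z q : K) {m k : ℤ} (hm : 0 ≤ m) (hk : m+1 ≤ k ∨ k ≤ -(m+1)) :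
    yt z q m k = 0 := by
  unfold yt; split
  · rw [gbZ, if_neg (by omega), mul_zero]
  · rfl

lemma et_vanish (z q : K) {m k : ℤ} (hm : 0 ≤ m) (hk : m+1 ≤ k ∨ k ≤ -(m+1)) :
    et z q m k = 0 := by
  unfold et; split
  · rw [gbZ, if_neg (by omega), mul_zero]
  · rfl

lemma ft_vanish (z q : K) {m k : ℤ} (hm : 0 ≤ m) (hk : m+1 ≤ k ∨ k ≤ -(m+1)) :
    ft z q m k = 0 := by
  unfold ft; split
  · rfl
  · rw [gbZ, if_neg (by omega), mul_zero]

lemma xt_step (z q : K) (hq : q ≠ 0) {m : ℤ} (k : ℤ) (hm : 1 ≤ m) :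
    xt z q (m+1) k = yt z q m k + et z q m k := by
  unfold xt yt et
  by_cases h : Even (m + k)
  · have hp : (m+k) % 2 = 0 := Int.even_iff.mp h
    have h1 : ¬ Even (m+1+k) := fun hc => by rw [Int.even_iff] at hc; omega
    rw [if_neg h1, if_pos h, if_pos h]
    rw [show m + 1 - 1 = m from by ring, show m+1+3*k-1 = m + 3*k from by ring]
    rw [gbZ_pascal1 (q^2) ((m+3*k)/2) hm]
    rw [show (m+3*k)/2 - 1 = (m+3*k-2)/2 from by omega]
    rw [show ((q^2 : K)) ^ ((m+3*k)/2) = q ^ (3*k+m) from by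
      rw [← zpow_natCast q 2, ← zpow_mul]; congr 1; omega]
    rw [show (q:K) ^ (3*k^2+3*k+m) = q ^ (3*k^2) * q ^ (3*k+m) from by
      rw [← zpow_add₀ hq]; congr 1; ring]
    ring
  · have hp : (m+k) % 2 = 1 := by rw [Int.even_iff] at h; omega
    have h1 : Even (m+1+k) := by rw [Int.even_iff]; omega
    rw [if_pos h1, if_neg h, if_neg h]
    ring

lemma yt_step (z q : K) (hz : z ≠ 0) (hq : q ≠ 0) {m : ℤ} (k : ℤ) (hm : 1 ≤ m) :
    yt z q (m+1) k = xt z q m k - z * q * et z q m (k-1) := by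
  unfold yt xt et
  by_cases h : Even (m + k)
  · have hp : (m+k) % 2 = 0 := Int.even_iff.mp h
    have h1 : ¬ Even (m+1+k) := fun hc => by rw [Int.even_iff] at hc; omega
    have h2 : ¬ Even (m+(k-1)) := fun hc => by rw [Int.even_iff] at hc; omega
    rw [if_neg h1, if_pos h, if_neg h2]
    ring
  · have hp : (m+k) % 2 = 1 := by rw [Int.even_iff] at h; omega
    have h1 : Even (m+1+k) := by rw [Int.even_iff]; omega
    have h2 : Even (m+(k-1)) := by rw [Int.even_iff]; omega
    rw [if_pos h1, if_neg h, if_pos h2]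
    rw [show m + 1 - 1 = m from by ring, show m+1+3*k-2 = m + 3*k - 1 from by ring]
    rw [gbZ_pascal2 (q^2) ((m+3*k-1)/2) hm]
    rw [show (m+3*k-1)/2 - 1 = (m+3*k-3)/2 from by omega]
    rw [show m + 3*(k-1) = m+3*k-3 from by ring]
    rw [show ((q^2 : K)) ^ (m - (m+3*k-1)/2) = q ^ (m-3*k+1) from by
      rw [← zpow_natCast q 2, ← zpow_mul]; congr 1; omega]
    rw [show ((-1 : K)) ^ (k-1) = (-1:K)^k * (-1:K)⁻¹ from by
      rw [zpow_sub₀ (by norm_num : (-1:K) ≠ 0), zpow_one, div_eq_mul_inv]]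
    rw [show (z : K) ^ (k-1) = z^k * z⁻¹ from by
      rw [zpow_sub₀ hz, zpow_one, div_eq_mul_inv]]
    rw [show (q : K) ^ (3*(k-1)^2+3*(k-1)+m) = q^(3*k^2) * q^(m-3*k+1) * q⁻¹ from by
      rw [show 3*(k-1)^2+3*(k-1)+m = 3*k^2 + (m-3*k+1) + (-1) from by ring,
        zpow_add₀ hq, zpow_add₀ hq, zpow_neg, zpow_one]]
    field_simp
    ring

lemma et_step (z q : K) (hz : z ≠ 0) (hq : q ≠ 0) {m : ℤ} (k : ℤ) (hm : 1 ≤ m) :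
    et z q (m+1) k = q * ft z q m k - z⁻¹ * q^(2*m-1) * yt z q m (k+1) := by
  unfold et ft yt
  by_cases h : Even (m + k)
  · have hp : (m+k) % 2 = 0 := Int.even_iff.mp h
    have h1 : ¬ Even (m+1+k) := fun hc => by rw [Int.even_iff] at hc; omega
    have h2 : ¬ Even (m+(k+1)) := fun hc => by rw [Int.even_iff] at hc; omega
    rw [if_neg h1, if_pos h, if_neg h2]
    ring
  · have hp : (m+k) % 2 = 1 := by rw [Int.even_iff] at h; omega
    have h1 : Even (m+1+k) := by rw [Int.even_iff]; omega
    have h2 : Even (m+(k+1)) := by rw [Int.even_iff]; omega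
    rw [if_pos h1, if_neg h, if_pos h2]
    rw [show m + 1 - 1 = m from by ring]
    rw [gbZ_pascal1 (q^2) ((m+1+3*k)/2) hm]
    rw [show (m+1+3*k)/2 - 1 = (m+3*k-1)/2 from by omega]
    rw [show m + 3*(k+1) - 2 = m+1+3*k from by ring]
    rw [show ((q^2 : K)) ^ ((m+1+3*k)/2) = q ^ (m+3*k+1) from by
      rw [← zpow_natCast q 2, ← zpow_mul]; congr 1; omega]
    rw [show (q:K) ^ (3*k^2+3*k+(m+1)) = q^(3*k^2) * q^(m+3*k+1) from by
      rw [← zpow_add₀ hq]; congr 1; ring]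
    rw [show (q:K) ^ (3*k^2+3*k+m) = q^(3*k^2) * q^(m+3*k+1) * q⁻¹ from by
      rw [show 3*k^2+3*k+m = 3*k^2 + (m+3*k+1) + (-1) from by ring,
        zpow_add₀ hq (3*k^2 + (m+3*k+1)) (-1), zpow_add₀ hq (3*k^2) (m+3*k+1), zpow_neg_one]]
    rw [show ((-1 : K)) ^ (k+1) = (-1:K)^k * (-1:K) from by
      rw [zpow_add₀ (by norm_num : (-1:K) ≠ 0), zpow_one]]
    rw [show (z : K) ^ (k+1) = z^k * z from by rw [zpow_add₀ hz, zpow_one]]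
    rw [show (q : K) ^ (3*(k+1)^2) = q^(3*k^2) * q^(m+3*k+1) * q^(m+3*k+1) * (q^(2*m-1))⁻¹ from by
      rw [show 3*(k+1)^2 = 3*k^2 + (m+3*k+1) + (m+3*k+1) + (-(2*m-1)) from by ring,
        zpow_add₀ hq (3*k^2 + (m+3*k+1) + (m+3*k+1)) (-(2*m-1)),
        zpow_add₀ hq (3*k^2 + (m+3*k+1)) (m+3*k+1),
        zpow_add₀ hq (3*k^2) (m+3*k+1), zpow_neg]]
    have hS : (q:K)^(2*m-1) ≠ 0 := zpow_ne_zero _ hq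
    field_simp
    ring

lemma ft_step (z q : K) (hq : q ≠ 0) {m : ℤ} (k : ℤ) (hm : 1 ≤ m) :
    ft z q (m+1) k = q^(2*m+1) * yt z q m k + q * et z q m k := by
  unfold ft yt et
  by_cases h : Even (m + k)
  · have hp : (m+k) % 2 = 0 := Int.even_iff.mp h
    have h1 : ¬ Even (m+1+k) := fun hc => by rw [Int.even_iff] at hc; omega
    rw [if_neg h1, if_pos h, if_pos h]
    rw [show m + 1 - 1 = m from by ring, show m+1+3*k-1 = m + 3*k from by ring]
    rw [gbZ_pascal2 (q^2) ((m+3*k)/2) hm]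
    rw [show (m+3*k)/2 - 1 = (m+3*k-2)/2 from by omega]
    rw [show ((q^2 : K)) ^ (m - (m+3*k)/2) = q ^ (m-3*k) from by
      rw [← zpow_natCast q 2, ← zpow_mul]; congr 1; omega]
    rw [show (q:K) ^ (3*k^2+3*k+(m+1)) = q^(3*k^2) * q^(2*m+1) * (q^(m-3*k))⁻¹ from by
      rw [show 3*k^2+3*k+(m+1) = 3*k^2 + (2*m+1) + (-(m-3*k)) from by ring,
        zpow_add₀ hq (3*k^2 + (2*m+1)) (-(m-3*k)),
        zpow_add₀ hq (3*k^2) (2*m+1), zpow_neg]]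
    rw [show (q:K) ^ (3*k^2+3*k+m) = q^(3*k^2) * q^(2*m+1) * (q^(m-3*k))⁻¹ * q⁻¹ from by
      rw [show 3*k^2+3*k+m = 3*k^2 + (2*m+1) + (-(m-3*k)) + (-1) from by ring,
        zpow_add₀ hq (3*k^2 + (2*m+1) + (-(m-3*k))) (-1),
        zpow_add₀ hq (3*k^2 + (2*m+1)) (-(m-3*k)),
        zpow_add₀ hq (3*k^2) (2*m+1), zpow_neg, zpow_neg_one]]
    have hP : (q:K)^(m-3*k) ≠ 0 := zpow_ne_zero _ hq
    field_simp
  · have hp : (m+k) % 2 = 1 := by rw [Int.even_iff] at h; omega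
    have h1 : Even (m+1+k) := by rw [Int.even_iff]; omega
    rw [if_pos h1, if_neg h, if_neg h]
    ring

end Terms

section Sums
variable {K : Type*} [Field K]

noncomputable def XS (z q : K) (n : ℕ) : K :=
  ∑ k ∈ Icc (-(n:ℤ)-1) ((n:ℤ)+1), xt z q (n:ℤ) k
noncomputable def YS (z q : K) (n : ℕ) : K :=
  ∑ k ∈ Icc (-(n:ℤ)-1) ((n:ℤ)+1), yt z q (n:ℤ) k
noncomputable def ES (z q : K) (n : ℕ) : K :=
  ∑ k ∈ Icc (-(n:ℤ)-1) ((n:ℤ)+1), et z q (n:ℤ) k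
noncomputable def FS (z q : K) (n : ℕ) : K :=
  ∑ k ∈ Icc (-(n:ℤ)-1) ((n:ℤ)+1), ft z q (n:ℤ) k

lemma XS_sum_step (z q : K) (hq : q ≠ 0) (n : ℕ) (hn : 1 ≤ n) :
    XS z q (n+1) = YS z q n + ES z q n := by
  have hn' : (1:ℤ) ≤ (n:ℤ) := by exact_mod_cast hn
  have h0 : (0:ℤ) ≤ (n:ℤ) := by positivity
  unfold XS YS ES
  push_cast
  rw [← Finset.sum_add_distrib]
  rw [Finset.sum_congr rfl (fun k _ => xt_step z q hq k hn')]
  refine (Finset.sum_subset (Finset.Icc_subset_Icc (by omega) (by omega)) fun k hk hk2 => ?_).symm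
  rw [Finset.mem_Icc] at hk hk2
  have hor : (n:ℤ)+1 ≤ k ∨ k ≤ -((n:ℤ)+1) := by omega
  rw [yt_vanish z q h0 hor, et_vanish z q h0 hor, add_zero]

lemma YS_sum_step (z q : K) (hz : z ≠ 0) (hq : q ≠ 0) (n : ℕ) (hn : 1 ≤ n) :
    YS z q (n+1) = XS z q n - z * q * ES z q n := by
  have hn' : (1:ℤ) ≤ (n:ℤ) := by exact_mod_cast hn
  have h0 : (0:ℤ) ≤ (n:ℤ) := by positivity
  unfold YS XS ES
  push_cast
  rw [Finset.sum_congr rfl (fun k _ => yt_step z q hz hq k hn')]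
  rw [Finset.sum_sub_distrib]
  have hA : ∑ k ∈ Icc (-((n:ℤ)+1)-1) ((n:ℤ)+1+1), xt z q (n:ℤ) k
      = ∑ k ∈ Icc (-(n:ℤ)-1) ((n:ℤ)+1), xt z q (n:ℤ) k := by
    refine (Finset.sum_subset (Finset.Icc_subset_Icc (by omega) (by omega)) fun k hk hk2 => ?_).symm
    rw [Finset.mem_Icc] at hk hk2
    exact xt_vanish z q h0 (by omega)
  have hB : ∑ k ∈ Icc (-((n:ℤ)+1)-1) ((n:ℤ)+1+1), z * q * et z q (n:ℤ) (k-1)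
      = z * q * ∑ k ∈ Icc (-(n:ℤ)-1) ((n:ℤ)+1), et z q (n:ℤ) k := by
    rw [← Finset.mul_sum]
    congr 1
    have hmap : Icc (-((n:ℤ)+1)-1) ((n:ℤ)+1+1)
        = (Icc (-(n:ℤ)-3) ((n:ℤ)+1)).map (addRightEmbedding 1) := by
      rw [Finset.map_add_right_Icc]; congr 1 <;> ring
    rw [hmap, Finset.sum_map]
    have : ∀ k ∈ Icc (-(n:ℤ)-3) ((n:ℤ)+1),
        et z q (n:ℤ) (addRightEmbedding 1 k - 1) = et z q (n:ℤ) k := by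
      intro k _
      rw [show addRightEmbedding 1 k - 1 = k from by simp [addRightEmbedding]]
    rw [Finset.sum_congr rfl this]
    refine (Finset.sum_subset (Finset.Icc_subset_Icc (by omega) (by omega)) fun k hk hk2 => ?_).symm
    rw [Finset.mem_Icc] at hk hk2
    exact et_vanish z q h0 (by omega)
  rw [hA, hB]

lemma ES_sum_step (z q : K) (hz : z ≠ 0) (hq : q ≠ 0) (n : ℕ) (hn : 1 ≤ n) :
    ES z q (n+1) = q * FS z q n - z⁻¹ * q^(2*(n:ℤ)-1) * YS z q n := by
  have hn' : (1:ℤ) ≤ (n:ℤ) := by exact_mod_cast hn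
  have h0 : (0:ℤ) ≤ (n:ℤ) := by positivity
  unfold ES FS YS
  push_cast
  rw [Finset.sum_congr rfl (fun k _ => et_step z q hz hq k hn')]
  rw [Finset.sum_sub_distrib]
  have hA : ∑ k ∈ Icc (-((n:ℤ)+1)-1) ((n:ℤ)+1+1), q * ft z q (n:ℤ) k
      = q * ∑ k ∈ Icc (-(n:ℤ)-1) ((n:ℤ)+1), ft z q (n:ℤ) k := by
    rw [← Finset.mul_sum]
    congr 1
    refine (Finset.sum_subset (Finset.Icc_subset_Icc (by omega) (by omega)) fun k hk hk2 => ?_).symm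
    rw [Finset.mem_Icc] at hk hk2
    exact ft_vanish z q h0 (by omega)
  have hB : ∑ k ∈ Icc (-((n:ℤ)+1)-1) ((n:ℤ)+1+1), z⁻¹ * q^(2*(n:ℤ)-1) * yt z q (n:ℤ) (k+1)
      = z⁻¹ * q^(2*(n:ℤ)-1) * ∑ k ∈ Icc (-(n:ℤ)-1) ((n:ℤ)+1), yt z q (n:ℤ) k := by
    rw [← Finset.mul_sum]
    congr 1
    have hmap : Icc (-((n:ℤ)+1)-1) ((n:ℤ)+1+1)
        = (Icc (-(n:ℤ)-1) ((n:ℤ)+3)).map (addRightEmbedding (-1)) := by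
      rw [Finset.map_add_right_Icc]; congr 1 <;> ring
    rw [hmap, Finset.sum_map]
    have : ∀ k ∈ Icc (-(n:ℤ)-1) ((n:ℤ)+3),
        yt z q (n:ℤ) (addRightEmbedding (-1) k + 1) = yt z q (n:ℤ) k := by
      intro k _
      rw [show addRightEmbedding (-1) k + 1 = k from by simp [addRightEmbedding]]
    rw [Finset.sum_congr rfl this]
    refine (Finset.sum_subset (Finset.Icc_subset_Icc (by omega) (by omega)) fun k hk hk2 => ?_).symm
    rw [Finset.mem_Icc] at hk hk2
    exact yt_vanish z q h0 (by omega)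
  rw [hA, hB]

lemma FS_sum_step (z q : K) (hq : q ≠ 0) (n : ℕ) (hn : 1 ≤ n) :
    FS z q (n+1) = q^(2*(n:ℤ)+1) * YS z q n + q * ES z q n := by
  have hn' : (1:ℤ) ≤ (n:ℤ) := by exact_mod_cast hn
  have h0 : (0:ℤ) ≤ (n:ℤ) := by positivity
  unfold FS YS ES
  push_cast
  rw [Finset.sum_congr rfl (fun k _ => ft_step z q hq k hn')]
  rw [Finset.sum_add_distrib, ← Finset.mul_sum, ← Finset.mul_sum]
  congr 1
  · congr 1
    refine (Finset.sum_subset (Finset.Icc_subset_Icc (by omega) (by omega)) fun k hk hk2 => ?_).symm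
    rw [Finset.mem_Icc] at hk hk2
    exact yt_vanish z q h0 (by omega)
  · congr 1
    refine (Finset.sum_subset (Finset.Icc_subset_Icc (by omega) (by omega)) fun k hk hk2 => ?_).symm
    rw [Finset.mem_Icc] at hk hk2
    exact et_vanish z q h0 (by omega)

end Sums

section Decomp
variable {K : Type*} [Field K]

lemma eps1_eq_ES (z q : K) (n : ℕ) (hn : 1 ≤ n) : eps1 z q n = ES z q n := by
  have h0 : (0:ℤ) ≤ (n:ℤ) := by positivity
  have hn' : (1:ℤ) ≤ (n:ℤ) := by exact_mod_cast hn
  unfold eps1 ES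
  by_cases hne : Even n
  · rw [if_pos hne]
    have hnz : ((n:ℤ)) % 2 = 0 := Int.even_iff.mp (by exact_mod_cast hne)
    have hterm : ∀ j ∈ Icc (-(n:ℤ)-1) ((n:ℤ)+1),
        z^(2*j) * q^(12*j^2+6*j+(n:ℤ)) * gbS (q^2) ((n:ℤ)-1) (((n:ℤ)+6*j)/2)
          = et z q (n:ℤ) (2*j) := by
      intro j _
      unfold et gbS
      have hev : Even ((n:ℤ) + 2*j) := by rw [Int.even_iff]; omega
      have hgbs : ¬(((n:ℤ)-1 = -1) ∧ ((n:ℤ)+6*j)/2 = 0) := by rintro ⟨h1, -⟩; omega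
      rw [if_neg hgbs, if_pos hev]
      rw [show (-1:K)^(2*j) = 1 from by rw [zpow_mul]; norm_num]
      rw [show (n:ℤ) + 3*(2*j) = (n:ℤ)+6*j from by ring,
          show 3*(2*j)^2+3*(2*j)+(n:ℤ) = 12*j^2+6*j+(n:ℤ) from by ring]
      ring
    rw [Finset.sum_congr rfl hterm]
    have himg : ∑ j ∈ Icc (-(n:ℤ)-1) ((n:ℤ)+1), et z q (n:ℤ) (2*j)
        = ∑ k ∈ (Icc (-(n:ℤ)-1) ((n:ℤ)+1)).image (fun j => 2*j), et z q (n:ℤ) k :=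
      (Finset.sum_image (fun x _ y _ h => by omega)).symm
    have hbig1 : ∑ k ∈ (Icc (-(n:ℤ)-1) ((n:ℤ)+1)).image (fun j => 2*j), et z q (n:ℤ) k
        = ∑ k ∈ Icc (-2*(n:ℤ)-2) (2*(n:ℤ)+2), et z q (n:ℤ) k := by
      refine Finset.sum_subset ?_ ?_
      · intro k hk
        simp only [Finset.mem_image, Finset.mem_Icc] at hk ⊢
        obtain ⟨j, hj, rfl⟩ := hk
        omega
      · intro k hk hki
        simp only [Finset.mem_image, Finset.mem_Icc] at hk hki
        unfold et
        rw [if_neg]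
        intro hev
        rw [Int.even_iff] at hev
        exact hki ⟨k/2, by omega, by omega⟩
    have hbig2 : ∑ k ∈ Icc (-(n:ℤ)-1) ((n:ℤ)+1), et z q (n:ℤ) k
        = ∑ k ∈ Icc (-2*(n:ℤ)-2) (2*(n:ℤ)+2), et z q (n:ℤ) k := by
      refine Finset.sum_subset (Finset.Icc_subset_Icc (by omega) (by omega))
        fun k hk hk2 => ?_
      rw [Finset.mem_Icc] at hk hk2
      exact et_vanish z q h0 (by omega)
    rw [himg, hbig1, ← hbig2]
  · rw [if_neg hne]
    have hnz : ((n:ℤ)) % 2 = 1 := by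
      have : ¬ Even ((n:ℤ)) := by simpa using hne
      rw [Int.even_iff] at this; omega
    have hterm : ∀ j ∈ Icc (-(n:ℤ)-1) ((n:ℤ)+1),
        z^(2*j-1) * q^(12*j^2-6*j+(n:ℤ)) * gbS (q^2) ((n:ℤ)-1) (((n:ℤ)+6*j-3)/2)
          = - et z q (n:ℤ) (2*j-1) := by
      intro j _
      unfold et gbS
      have hev : Even ((n:ℤ) + (2*j-1)) := by rw [Int.even_iff]; omega
      have hgbs : ¬(((n:ℤ)-1 = -1) ∧ ((n:ℤ)+6*j-3)/2 = 0) := by rintro ⟨h1, -⟩; omega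
      rw [if_neg hgbs, if_pos hev]
      rw [show (-1:K)^(2*j-1) = -1 from by
        rw [zpow_sub₀ (by norm_num : (-1:K) ≠ 0), zpow_mul, zpow_one]; norm_num]
      rw [show (n:ℤ) + 3*(2*j-1) = (n:ℤ)+6*j-3 from by ring,
          show 3*(2*j-1)^2+3*(2*j-1)+(n:ℤ) = 12*j^2-6*j+(n:ℤ) from by ring]
      ring
    rw [Finset.sum_congr rfl hterm, Finset.sum_neg_distrib, neg_neg]
    have himg : ∑ j ∈ Icc (-(n:ℤ)-1) ((n:ℤ)+1), et z q (n:ℤ) (2*j-1)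
        = ∑ k ∈ (Icc (-(n:ℤ)-1) ((n:ℤ)+1)).image (fun j => 2*j-1), et z q (n:ℤ) k :=
      (Finset.sum_image (fun x _ y _ h => by omega)).symm
    have hbig1 : ∑ k ∈ (Icc (-(n:ℤ)-1) ((n:ℤ)+1)).image (fun j => 2*j-1), et z q (n:ℤ) k
        = ∑ k ∈ Icc (-2*(n:ℤ)-3) (2*(n:ℤ)+1), et z q (n:ℤ) k := by
      refine Finset.sum_subset ?_ ?_
      · intro k hk
        simp only [Finset.mem_image, Finset.mem_Icc] at hk ⊢
        obtain ⟨j, hj, rfl⟩ := hk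
        omega
      · intro k hk hki
        simp only [Finset.mem_image, Finset.mem_Icc] at hk hki
        unfold et
        rw [if_neg]
        intro hev
        rw [Int.even_iff] at hev
        exact hki ⟨(k+1)/2, by omega, by omega⟩
    have hbig2 : ∑ k ∈ Icc (-(n:ℤ)-1) ((n:ℤ)+1), et z q (n:ℤ) k
        = ∑ k ∈ Icc (-2*(n:ℤ)-3) (2*(n:ℤ)+1), et z q (n:ℤ) k := by
      refine Finset.sum_subset (Finset.Icc_subset_Icc (by omega) (by omega))
        fun k hk hk2 => ?_
      rw [Finset.mem_Icc] at hk hk2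
      exact et_vanish z q h0 (by omega)
    rw [himg, hbig1, ← hbig2]

lemma Q1_decomp (z q : K) (n : ℕ) (hn : 1 ≤ n) :
    Q1 z q n = XS z q n + YS z q n + ES z q n := by
  unfold Q1
  rw [eps1_eq_ES z q n hn]
  congr 1
  unfold XS YS
  rw [← Finset.sum_add_distrib]
  refine Finset.sum_congr rfl fun j _ => ?_
  by_cases h : Even ((n:ℤ) + j)
  · have hp := Int.even_iff.mp h
    unfold xt yt
    rw [if_pos h, if_pos h, Int.fdiv_eq_ediv_of_nonneg _ (by norm_num)]
    rw [show ((n:ℤ)+3*j-1)/2 = ((n:ℤ)+3*j-2)/2 from by omega]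
    ring
  · have hp : ((n:ℤ)+j) % 2 = 1 := by rw [Int.even_iff] at h; omega
    unfold xt yt
    rw [if_neg h, if_neg h, Int.fdiv_eq_ediv_of_nonneg _ (by norm_num)]
    ring

end Decomp

section Base
variable {K : Type*} [Field K]

lemma XS_one (z q : K) : XS z q 1 = 1 := by
  unfold XS
  rw [Nat.cast_one, Finset.sum_eq_single 0]
  · unfold xt gbZ
    rw [if_neg (by rw [Int.even_iff]; norm_num), if_pos (by norm_num)]
    norm_num [gb_zero_right]
  · intro k hk hk0
    rw [Finset.mem_Icc] at hk
    have : k = -2 ∨ k = -1 ∨ k = 1 ∨ k = 2 := by omega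
    rcases this with rfl | rfl | rfl | rfl
    · exact xt_vanish z q (by norm_num) (by norm_num)
    · unfold xt; rw [if_pos ⟨0, by norm_num⟩]
    · unfold xt; rw [if_pos ⟨1, by norm_num⟩]
    · exact xt_vanish z q (by norm_num) (by norm_num)
  · intro h
    exact absurd (by norm_num : (0:ℤ) ∈ Icc (-(1:ℤ)-1) ((1:ℤ)+1)) h

lemma YS_one (z q : K) : YS z q 1 = 0 := by
  unfold YS
  rw [Nat.cast_one]
  refine Finset.sum_eq_zero fun k hk => ?_
  rw [Finset.mem_Icc] at hk
  have : k = -2 ∨ k = -1 ∨ k = 0 ∨ k = 1 ∨ k = 2 := by omega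
  rcases this with rfl | rfl | rfl | rfl | rfl
  · exact yt_vanish z q (by norm_num) (by norm_num)
  · unfold yt gbZ; rw [if_pos ⟨0, by norm_num⟩, if_neg (by norm_num), mul_zero]
  · unfold yt; rw [if_neg (by rw [Int.even_iff]; norm_num)]
  · unfold yt gbZ; rw [if_pos ⟨1, by norm_num⟩, if_neg (by norm_num), mul_zero]
  · exact yt_vanish z q (by norm_num) (by norm_num)

lemma ES_one (z q : K) : ES z q 1 = 0 := by
  unfold ES
  rw [Nat.cast_one]
  refine Finset.sum_eq_zero fun k hk => ?_
  rw [Finset.mem_Icc] at hk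
  have : k = -2 ∨ k = -1 ∨ k = 0 ∨ k = 1 ∨ k = 2 := by omega
  rcases this with rfl | rfl | rfl | rfl | rfl
  · exact et_vanish z q (by norm_num) (by norm_num)
  · unfold et gbZ; rw [if_pos ⟨0, by norm_num⟩, if_neg (by norm_num), mul_zero]
  · unfold et; rw [if_neg (by rw [Int.even_iff]; norm_num)]
  · unfold et gbZ; rw [if_pos ⟨1, by norm_num⟩, if_neg (by norm_num), mul_zero]
  · exact et_vanish z q (by norm_num) (by norm_num)

lemma FS_one (z q : K) : FS z q 1 = q := by
  unfold FS
  rw [Nat.cast_one, Finset.sum_eq_single 0]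
  · unfold ft gbZ
    rw [if_neg (by rw [Int.even_iff]; norm_num), if_pos (by norm_num)]
    norm_num [gb_zero_right]
  · intro k hk hk0
    rw [Finset.mem_Icc] at hk
    have : k = -2 ∨ k = -1 ∨ k = 1 ∨ k = 2 := by omega
    rcases this with rfl | rfl | rfl | rfl
    · exact ft_vanish z q (by norm_num) (by norm_num)
    · unfold ft; rw [if_pos ⟨0, by norm_num⟩]
    · unfold ft; rw [if_pos ⟨1, by norm_num⟩]
    · exact ft_vanish z q (by norm_num) (by norm_num)
  · intro h
    exact absurd (by norm_num : (0:ℤ) ∈ Icc (-(1:ℤ)-1) ((1:ℤ)+1)) h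

lemma key5 (z w q v : K) (hw : z * w = 1)
    (x0 y0 e0 f0 x1 y1 e1 f1 x2 y2 e2 f2 x3 y3 e3 f3 x4 y4 e4 : K)
    (hx1 : x1 = y0 + e0) (hy1 : y1 = x0 - z*q*e0)
    (he1 : e1 = q*f0 - w*(v*q)*y0) (hf1 : f1 = v*q^3*y0 + q*e0)
    (hx2 : x2 = y1 + e1) (hy2 : y2 = x1 - z*q*e1)
    (he2 : e2 = q*f1 - w*(v*q^3)*y1) (hf2 : f2 = v*q^5*y1 + q*e1)
    (hx3 : x3 = y2 + e2) (hy3 : y3 = x2 - z*q*e2)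
    (he3 : e3 = q*f2 - w*(v*q^5)*y2) (hf3 : f3 = v*q^7*y2 + q*e2)
    (hx4 : x4 = y3 + e3) (hy4 : y4 = x3 - z*q*e3)
    (he4 : e4 = q*f3 - w*(v*q^7)*y3) :
    x4 + y4 + e4 = (1-q^2)*(x3+y3+e3) + (2*q^2+v*q^8)*(x2+y2+e2)
      + (q^4-q^2-(z+w)*(v*q^7))*(x1+y1+e1) + (v*q^6-q^4)*(x0+y0+e0) := by
  subst hx1 hy1 he1 hf1 hx2 hy2 he2 hf2 hx3 hy3 he3 hf3 hx4 hy4 he4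
  linear_combination (q^6*v*e0 + q^6*v*y0 + q^6*v*x0 + q^9*v*f0 + q^10*v*e0 + q^12*v^2*y0 + (-1)*w*q^9*v^2*y0 + (-1)*w*q^11*v^2*x0 + (-1)*z*q^7*v*e0 + (-1)*z*q^8*v*f0 + z*w*q^8*v^2*y0 + z*w*q^12*v^2*e0) * hw

lemma key4 (z w q Q0 : K) (hw : z * w = 1)
    (x2 y2 e2 f2 x3 y3 e3 f3 x4 y4 e4 : K)
    (hx2 : x2 = 0 + 0) (hy2 : y2 = 1 - z*q*0)
    (he2 : e2 = q*q - w*(q^1)*0) (hf2 : f2 = q^3*0 + q*0)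
    (hx3 : x3 = y2 + e2) (hy3 : y3 = x2 - z*q*e2)
    (he3 : e3 = q*f2 - w*(q^3)*y2) (hf3 : f3 = q^5*y2 + q*e2)
    (hx4 : x4 = y3 + e3) (hy4 : y4 = x3 - z*q*e3)
    (he4 : e4 = q*f3 - w*(q^5)*y3) :
    x4 + y4 + e4 = (1-q^2)*(x3+y3+e3) + (2*q^2+q^6)*(x2+y2+e2)
      + (q^4-q^2-(z+w)*q^5)*(1+0+0) + (q^4-q^4)*Q0 := by
  subst hx2 hy2 he2 hf2 hx3 hy3 he3 hf3 hx4 hy4 he4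
  linear_combination (q^4 + q^8) * hw

end Base

/-- The right-hand side `Q_n(z,q)` of McLaughlin–Sills Identity 1 satisfies,
for `n ≥ 4`, the recurrence
`Q_n = (1-q²)Q_{n-1} + (2q²+q^{2n-2})Q_{n-2} + (q⁴-q²-(z+z⁻¹)q^{2n-3})Q_{n-3}
      + (q^{2n-4}-q⁴)Q_{n-4}`. -/
theorem Q1_recurrence {K : Type*} [Field K] (z q : K) (hz : z ≠ 0) (hq : q ≠ 0)
    (n : ℕ) (hn : 4 ≤ n) :
    Q1 z q n =
      (1 - q^2) * Q1 z q (n-1) + (2*q^2 + q^(2*n-2)) * Q1 z q (n-2)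
        + (q^4 - q^2 - (z + z⁻¹) * q^(2*n-3)) * Q1 z q (n-3)
        + (q^(2*n-4) - q^4) * Q1 z q (n-4) := by
  have hw : z * z⁻¹ = 1 := mul_inv_cancel₀ hz
  rcases Nat.lt_or_ge n 5 with h5 | h5
  · -- n = 4
    have hn4 : n = 4 := by omega
    subst hn4
    norm_num
    have hx2 := XS_sum_step z q hq 1 le_rfl
    have hy2 := YS_sum_step z q hz hq 1 le_rfl
    have he2 := ES_sum_step z q hz hq 1 le_rfl
    have hf2 := FS_sum_step z q hq 1 le_rfl
    have hx3 := XS_sum_step z q hq 2 (by norm_num)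
    have hy3 := YS_sum_step z q hz hq 2 (by norm_num)
    have he3 := ES_sum_step z q hz hq 2 (by norm_num)
    have hf3 := FS_sum_step z q hq 2 (by norm_num)
    have hx4 := XS_sum_step z q hq 3 (by norm_num)
    have hy4 := YS_sum_step z q hz hq 3 (by norm_num)
    have he4 := ES_sum_step z q hz hq 3 (by norm_num)
    rw [XS_one, YS_one, ES_one, FS_one] at *
    rw [show (q:K) ^ (2*((1:ℕ):ℤ)-1) = q^(1:ℕ) from by
      rw [show 2*((1:ℕ):ℤ)-1 = ((1:ℕ):ℤ) from by norm_num]; exact zpow_natCast q 1] at he2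
    rw [show (q:K) ^ (2*((1:ℕ):ℤ)+1) = q^(3:ℕ) from by
      rw [show 2*((1:ℕ):ℤ)+1 = ((3:ℕ):ℤ) from by norm_num]; exact zpow_natCast q 3] at hf2
    rw [show (q:K) ^ (2*((2:ℕ):ℤ)-1) = q^(3:ℕ) from by
      rw [show 2*((2:ℕ):ℤ)-1 = ((3:ℕ):ℤ) from by norm_num]; exact zpow_natCast q 3] at he3
    rw [show (q:K) ^ (2*((2:ℕ):ℤ)+1) = q^(5:ℕ) from by
      rw [show 2*((2:ℕ):ℤ)+1 = ((5:ℕ):ℤ) from by norm_num]; exact zpow_natCast q 5] at hf3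
    rw [show (q:K) ^ (2*((3:ℕ):ℤ)-1) = q^(5:ℕ) from by
      rw [show 2*((3:ℕ):ℤ)-1 = ((5:ℕ):ℤ) from by norm_num]; exact zpow_natCast q 5] at he4
    rw [Q1_decomp z q 4 (by norm_num), Q1_decomp z q 3 (by norm_num),
      Q1_decomp z q 2 (by norm_num), Q1_decomp z q 1 (by norm_num),
      XS_one, YS_one, ES_one]
    linear_combination key4 z z⁻¹ q (Q1 z q 0) hw
      (XS z q 2) (YS z q 2) (ES z q 2) (FS z q 2)
      (XS z q 3) (YS z q 3) (ES z q 3) (FS z q 3)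
      (XS z q 4) (YS z q 4) (ES z q 4)
      hx2 hy2 he2 hf2 hx3 hy3 he3 hf3 hx4 hy4 he4
  · -- n ≥ 5
    obtain ⟨l, rfl⟩ : ∃ l, n = l + 5 := ⟨n - 5, by omega⟩
    rw [show l+5-1 = l+4 from by omega, show l+5-2 = l+3 from by omega,
      show l+5-3 = l+2 from by omega, show l+5-4 = l+1 from by omega,
      show 2*(l+5)-2 = 2*l+8 from by omega, show 2*(l+5)-3 = 2*l+7 from by omega,
      show 2*(l+5)-4 = 2*l+6 from by omega, pow_add q (2*l) 8, pow_add q (2*l) 7,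
      pow_add q (2*l) 6]
    have hx1 := XS_sum_step z q hq (l+1) (by omega)
    have hy1 := YS_sum_step z q hz hq (l+1) (by omega)
    have he1 := ES_sum_step z q hz hq (l+1) (by omega)
    have hf1 := FS_sum_step z q hq (l+1) (by omega)
    have hx2 := XS_sum_step z q hq (l+2) (by omega)
    have hy2 := YS_sum_step z q hz hq (l+2) (by omega)
    have he2 := ES_sum_step z q hz hq (l+2) (by omega)
    have hf2 := FS_sum_step z q hq (l+2) (by omega)
    have hx3 := XS_sum_step z q hq (l+3) (by omega)
    have hy3 := YS_sum_step z q hz hq (l+3) (by omega)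
    have he3 := ES_sum_step z q hz hq (l+3) (by omega)
    have hf3 := FS_sum_step z q hq (l+3) (by omega)
    have hx4 := XS_sum_step z q hq (l+4) (by omega)
    have hy4 := YS_sum_step z q hz hq (l+4) (by omega)
    have he4 := ES_sum_step z q hz hq (l+4) (by omega)
    rw [show (q:K) ^ (2*((l+1:ℕ):ℤ)-1) = q^(2*l) * q from by
      rw [show 2*((l+1:ℕ):ℤ)-1 = ((2*l:ℕ):ℤ) + ((1:ℕ):ℤ) from by push_cast; ring,
        zpow_add₀ hq, zpow_natCast, zpow_natCast, pow_one]] at he1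
    rw [show (q:K) ^ (2*((l+1:ℕ):ℤ)+1) = q^(2*l) * q^3 from by
      rw [show 2*((l+1:ℕ):ℤ)+1 = ((2*l:ℕ):ℤ) + ((3:ℕ):ℤ) from by push_cast; ring,
        zpow_add₀ hq, zpow_natCast, zpow_natCast]] at hf1
    rw [show (q:K) ^ (2*((l+2:ℕ):ℤ)-1) = q^(2*l) * q^3 from by
      rw [show 2*((l+2:ℕ):ℤ)-1 = ((2*l:ℕ):ℤ) + ((3:ℕ):ℤ) from by push_cast; ring,
        zpow_add₀ hq, zpow_natCast, zpow_natCast]] at he2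
    rw [show (q:K) ^ (2*((l+2:ℕ):ℤ)+1) = q^(2*l) * q^5 from by
      rw [show 2*((l+2:ℕ):ℤ)+1 = ((2*l:ℕ):ℤ) + ((5:ℕ):ℤ) from by push_cast; ring,
        zpow_add₀ hq, zpow_natCast, zpow_natCast]] at hf2
    rw [show (q:K) ^ (2*((l+3:ℕ):ℤ)-1) = q^(2*l) * q^5 from by
      rw [show 2*((l+3:ℕ):ℤ)-1 = ((2*l:ℕ):ℤ) + ((5:ℕ):ℤ) from by push_cast; ring,
        zpow_add₀ hq, zpow_natCast, zpow_natCast]] at he3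
    rw [show (q:K) ^ (2*((l+3:ℕ):ℤ)+1) = q^(2*l) * q^7 from by
      rw [show 2*((l+3:ℕ):ℤ)+1 = ((2*l:ℕ):ℤ) + ((7:ℕ):ℤ) from by push_cast; ring,
        zpow_add₀ hq, zpow_natCast, zpow_natCast]] at hf3
    rw [show (q:K) ^ (2*((l+4:ℕ):ℤ)-1) = q^(2*l) * q^7 from by
      rw [show 2*((l+4:ℕ):ℤ)-1 = ((2*l:ℕ):ℤ) + ((7:ℕ):ℤ) from by push_cast; ring,
        zpow_add₀ hq, zpow_natCast, zpow_natCast]] at he4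
    rw [Q1_decomp z q (l+5) (by omega), Q1_decomp z q (l+4) (by omega),
      Q1_decomp z q (l+3) (by omega), Q1_decomp z q (l+2) (by omega),
      Q1_decomp z q (l+1) (by omega)]
    linear_combination key5 z z⁻¹ q (q^(2*l)) hw
      (XS z q (l+1)) (YS z q (l+1)) (ES z q (l+1)) (FS z q (l+1))
      (XS z q (l+2)) (YS z q (l+2)) (ES z q (l+2)) (FS z q (l+2))
      (XS z q (l+3)) (YS z q (l+3)) (ES z q (l+3)) (FS z q (l+3))
      (XS z q (l+4)) (YS z q (l+4)) (ES z q (l+4)) (FS z q (l+4))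
      (XS z q (l+5)) (YS z q (l+5)) (ES z q (l+5))
      hx1 hy1 he1 hf1 hx2 hy2 he2 hf2 hx3 hy3 he3 hf3 hx4 hy4 he4
end

section
/- For n ≥ 3, the sum S_n(z,q) := ∑_{j=0}^{⌊n/2⌋} ∑_{h=0}^{j} ∑_{i=0}^{j} (-1)^{h+i} z^{h-i} q^{h²+i²+2j²} qbinom(j,h;q²) qbinom(j,i;q²) qbinom(j+⌊(n-h-i)/2⌋, 2j; q²) satisfies the same fourth-order recurrence as the coefficients of f: S_n = (1-q²)S_{n-1} + (2q² + q^{2n-2})S_{n-2} + (q⁴ - q² - (z+z⁻¹)q^{2n-3})S_{n-3} + (q^{2n-4} - q⁴)S_{n-4} for n ≥ 4, and S_0 = S_1 = 1, S_2 = 1+q², S_3 = 1+q² - (z+z⁻¹)q³. -/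
open Finset

namespace MS1
open PowerSeries
section CR
variable {K : Type*} [CommRing K] (q : K)
lemma gb_zero (n : ℕ) : gb q n 0 = 1 := by cases n <;> rfl
lemma gb_succ (n k : ℕ) : gb q (n+1) (k+1) = gb q n k + q ^ (k+1) * gb q n (k+1) := rfl
lemma gb_of_lt : ∀ {n k : ℕ}, n < k → gb q n k = 0 := by
  intro n
  induction n with
  | zero => intro k hk; match k, hk with | k+1, _ => rfl
  | succ n ih =>
    intro k hk
    match k, hk with
    | k+1, hk => rw [gb_succ, ih (by omega), ih (by omega), mul_zero, add_zero]
lemma gb_self : ∀ n : ℕ, gb q n n = 1 := by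
  intro n
  induction n with
  | zero => rfl
  | succ n ih => rw [gb_succ, ih, gb_of_lt q (by omega), mul_zero, add_zero]
lemma gb_pascal2 : ∀ k d : ℕ, gb q (k+d+1) (k+1) = gb q (k+d) (k+1) + q ^ d * gb q (k+d) k := by
  intro k
  induction k with
  | zero =>
    intro d
    induction d with
    | zero => simp [gb_succ, gb_of_lt q (by omega : (0:ℕ) < 1), gb_zero]
    | succ d ihd =>
      have eA := gb_succ q (d+1) 0
      have eB := gb_succ q d 0
      simp only [Nat.zero_add, gb_zero] at eA eB ihd ⊢
      linear_combination eA + q * ihd - eB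
  | succ k ihk =>
    intro d
    induction d with
    | zero =>
      have e1 : gb q (k+1+0+1) (k+1+1) = 1 := gb_self q (k+2)
      have e2 : gb q (k+1+0) (k+1+1) = 0 := gb_of_lt q (by omega)
      have e3 : gb q (k+1+0) (k+1) = 1 := gb_self q (k+1)
      rw [e1, e2, e3]; ring
    | succ d ihd =>
      have eA : gb q (k+d+2+1) (k+1+1) = gb q (k+d+2) (k+1) + q^(k+1+1) * gb q (k+d+2) (k+1+1) :=
        gb_succ q (k+d+2) (k+1)
      have eB : gb q (k+d+1+1) (k+1+1) = gb q (k+d+1) (k+1) + q^(k+1+1) * gb q (k+d+1) (k+1+1) :=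
        gb_succ q (k+d+1) (k+1)
      have eC : gb q (k+d+1+1) (k+1) = gb q (k+d+1) k + q^(k+1) * gb q (k+d+1) (k+1) :=
        gb_succ q (k+d+1) k
      have e1 := ihk (d+1)
      have e2 := ihd
      rw [show k+(d+1)+1 = k+d+1+1 from by omega, show k+(d+1) = k+d+1 from by omega] at e1
      rw [show k+1+d+1 = k+d+2 from by omega, show k+1+d = k+d+1 from by omega] at e2
      rw [show k+1+(d+1)+1 = k+d+2+1 from by omega, show k+1+(d+1) = k+d+2 from by omega]
      linear_combination eA + e1 + q^(k+1+1) * e2 - eB - q^(d+1) * eC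
end CR

variable {K : Type*} [Field K] (z q : K)

def cp (q : K) (j m : ℕ) : K := if m % 2 = 0 then gb (q^2) (m/2 + 2*j) (2*j) else 0

lemma cp_even (j M : ℕ) : cp q j (M+M) = gb (q^2) (M + 2*j) (2*j) := by
  have h1 : (M+M) % 2 = 0 := by omega
  have h2 : (M+M) / 2 = M := by omega
  rw [cp, if_pos h1, h2]

lemma cp_odd (j M : ℕ) (h : M % 2 = 1) : cp q j M = 0 := by
  rw [cp, if_neg (by omega)]

noncomputable def Pps (q : K) (j : ℕ) : PowerSeries K := PowerSeries.mk (cp q j)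

lemma coeff_one_sub_X2_mul (F : PowerSeries K) (n : ℕ) :
    coeff n ((1 - X^2) * F) = coeff n F - (if 2 ≤ n then coeff (n-2) F else 0) := by
  rw [sub_mul, one_mul, map_sub, coeff_X_pow_mul']

lemma coeff_one_sub_CX2_mul (c : K) (F : PowerSeries K) (n : ℕ) :
    coeff n ((1 - PowerSeries.C c * X^2) * F)
      = coeff n F - c * (if 2 ≤ n then coeff (n-2) F else 0) := by
  rw [sub_mul, one_mul, map_sub, mul_assoc, coeff_C_mul, coeff_X_pow_mul']


lemma K3 (j : ℕ) :
    (1 - X^2) * ((1 - PowerSeries.C (q^2) * X^2) * Pps q (j+1)) = rescale (q^2) (Pps q j) := by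
  rw [Pps, Pps, rescale_mk]
  ext n
  rw [coeff_one_sub_X2_mul, coeff_one_sub_CX2_mul, coeff_one_sub_CX2_mul, coeff_mk]
  simp only [coeff_mk]
  rcases Nat.even_or_odd n with ⟨M, rfl⟩ | ⟨M, rfl⟩
  · match M with
    | 0 =>
      rw [show ((0:ℕ)+0) = 0+0 from rfl, cp_even, cp_even]
      simp only [Nat.zero_add]
      rw [gb_self, gb_self]
      norm_num
    | 1 =>
      rw [show ((1:ℕ)+1-2) = 0+0 from by omega, if_neg (by omega : ¬ (2:ℕ) ≤ 0+0),
        cp_even, cp_even, cp_even]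
      rw [if_pos (by omega : (2:ℕ) ≤ 1+1)]
      simp only [Nat.zero_add]
      rw [show 2*(j+1) = 2*j+2 from by omega, show 1+2*j = 2*j+1 from by omega,
        show (1:ℕ)+(2*j+2) = 2*j+3 from by omega]
      have P1 := gb_pascal2 (q^2) (2*j+1) 1
      have P3 := gb_pascal2 (q^2) (2*j) 1
      rw [show 2*j+1+1+1 = 2*j+3 from by omega, show 2*j+1+1 = 2*j+2 from by omega] at P1
      rw [show 2*j+1+1 = 2*j+2 from by omega] at P3
      have s1 : gb (q^2) (2*j+2) (2*j+2) = 1 := gb_self _ _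
      have s2 : gb (q^2) (2*j+1) (2*j+1) = 1 := gb_self _ _
      rw [if_pos (by omega : (2:ℕ) ≤ 1+1)]
      linear_combination P1 + q^2*P3 - q^2*s1 + q^2*s2
    | (M+2) =>
      rw [show (M+2)+(M+2)-2 = (M+1)+(M+1) from by omega,
          show (M+1)+(M+1)-2 = M+M from by omega,
          if_pos (by omega : (2:ℕ) ≤ (M+2)+(M+2)), if_pos (by omega : (2:ℕ) ≤ (M+1)+(M+1)),
          cp_even, cp_even, cp_even, cp_even]
      rw [show 2*(j+1) = 2*j+2 from by omega, show M+2+(2*j+2) = 2*j+M+4 from by omega,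
          show M+1+(2*j+2) = 2*j+M+3 from by omega, show M+(2*j+2) = 2*j+M+2 from by omega,
          show M+2+2*j = 2*j+M+2 from by omega]
      have P1 := gb_pascal2 (q^2) (2*j+1) (M+2)
      have P2 := gb_pascal2 (q^2) (2*j+1) (M+1)
      have P3 := gb_pascal2 (q^2) (2*j) (M+2)
      rw [show 2*j+1+(M+2)+1 = 2*j+M+4 from by omega, show 2*j+1+(M+2) = 2*j+M+3 from by omega,
          show 2*j+1+1 = 2*j+2 from by omega] at P1
      rw [show 2*j+1+(M+1)+1 = 2*j+M+3 from by omega, show 2*j+1+(M+1) = 2*j+M+2 from by omega,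
          show 2*j+1+1 = 2*j+2 from by omega] at P2
      rw [show 2*j+(M+2)+1 = 2*j+M+3 from by omega, show 2*j+(M+2) = 2*j+M+2 from by omega] at P3
      rw [if_pos (by omega : (2:ℕ) ≤ (M+2)+(M+2))]
      linear_combination P1 + (q^2)^(M+2) * P3 - q^2 * P2
  · match M with
    | 0 =>
      rw [cp_odd q (j+1) (2*0+1) (by omega), cp_odd q j (2*0+1) (by omega),
        if_neg (by omega : ¬ (2:ℕ) ≤ 2*0+1)]
      norm_num
    | (M+1) =>
      rw [cp_odd q (j+1) (2*(M+1)+1) (by omega), cp_odd q j (2*(M+1)+1) (by omega),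
        if_pos (by omega : (2:ℕ) ≤ 2*(M+1)+1), show 2*(M+1)+1-2 = 2*M+1 from by omega,
        cp_odd q (j+1) (2*M+1) (by omega)]
      have hz : (if 2 ≤ 2*M+1 then cp q (j+1) (2*M+1-2) else 0) = (0:K) := by
        match M with
        | 0 => rw [if_neg (by omega)]
        | (M+1) => rw [if_pos (by omega), show 2*(M+1)+1-2 = 2*M+1 from by omega,
            cp_odd q (j+1) (2*M+1) (by omega)]
      rw [hz]
      simp

def ca (z q : K) (j h : ℕ) : K := (-1)^h * z^h * q^(h^2) * gb (q^2) j h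
def cb (z q : K) (j i : ℕ) : K := (-1)^i * z⁻¹^i * q^(i^2) * gb (q^2) j i

noncomputable def Aps (z q : K) (j : ℕ) : PowerSeries K := PowerSeries.mk (ca z q j)
noncomputable def Bps (z q : K) (j : ℕ) : PowerSeries K := PowerSeries.mk (cb z q j)

noncomputable def gps (z q : K) (j : ℕ) : PowerSeries K :=
  PowerSeries.C (q^(2*j^2)) * (PowerSeries.X^(2*j) * (Aps z q j * (Bps z q j * Pps q j)))

lemma K1 (j : ℕ) :
    Aps z q (j+1) = (1 - PowerSeries.C (z*q) * X) * rescale (q^2) (Aps z q j) := by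
  rw [Aps, Aps, rescale_mk]
  ext n
  rw [sub_mul, one_mul, map_sub, mul_assoc, coeff_C_mul, coeff_mk]
  cases n with
  | zero =>
    rw [coeff_zero_X_mul, coeff_mk]
    simp [ca, gb_zero]
  | succ n =>
    rw [coeff_succ_X_mul, coeff_mk, coeff_mk, ca, ca, ca, gb_succ]
    rw [show (n+1)^2 = n^2+2*n+1 from by ring]
    ring

lemma K2 (j : ℕ) :
    Bps z q (j+1) = (1 - PowerSeries.C (z⁻¹*q) * X) * rescale (q^2) (Bps z q j) := by
  rw [Bps, Bps, rescale_mk]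
  ext n
  rw [sub_mul, one_mul, map_sub, mul_assoc, coeff_C_mul, coeff_mk]
  cases n with
  | zero =>
    rw [coeff_zero_X_mul, coeff_mk]
    simp [cb, gb_zero]
  | succ n =>
    rw [coeff_succ_X_mul, coeff_mk, coeff_mk, cb, cb, cb, gb_succ]
    rw [show (n+1)^2 = n^2+2*n+1 from by ring]
    ring

lemma rescale_C' (a c : K) : rescale a (PowerSeries.C c) = PowerSeries.C c := by
  ext n
  rw [coeff_rescale]
  cases n with
  | zero => simp
  | succ n => simp [coeff_C]

lemma K4 (j : ℕ) :
    (1 - X^2) * ((1 - PowerSeries.C (q^2) * X^2) * gps z q (j+1))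
      = PowerSeries.C (q^2) * (X^2 * ((1 - PowerSeries.C (z*q) * X) *
          ((1 - PowerSeries.C (z⁻¹*q) * X) * rescale (q^2) (gps z q j)))) := by
  have hC : (PowerSeries.C (R := K)) (q^(2*(j+1)^2))
      = PowerSeries.C (q^2) * ((PowerSeries.C (q^2))^(2*j) * PowerSeries.C (q^(2*j^2))) := by
    rw [← map_pow, ← map_mul, ← map_mul]
    congr 1
    ring
  have hres : rescale (q^2) (gps z q j)
      = PowerSeries.C (q^(2*j^2)) * ((PowerSeries.C (q^2) * X)^(2*j) *
          (rescale (q^2) (Aps z q j) * (rescale (q^2) (Bps z q j) * rescale (q^2) (Pps q j)))) := by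
    rw [gps, map_mul (rescale (q^2)), map_mul (rescale (q^2)), map_mul (rescale (q^2)),
      map_pow (rescale (q^2)), rescale_X, rescale_C', map_mul (rescale (q^2))]
  rw [hres, gps, hC]
  linear_combination
    (PowerSeries.C (q^2) * ((PowerSeries.C (q^2))^(2*j) * PowerSeries.C (q^(2*j^2)))
      * X^(2*(j+1)) * Aps z q (j+1) * Bps z q (j+1)) * K3 q j
    + (PowerSeries.C (q^2) * ((PowerSeries.C (q^2))^(2*j) * PowerSeries.C (q^(2*j^2)))
      * X^(2*(j+1)) * Bps z q (j+1) * rescale (q^2) (Pps q j)) * K1 z q j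
    + (PowerSeries.C (q^2) * ((PowerSeries.C (q^2))^(2*j) * PowerSeries.C (q^(2*j^2)))
      * X^(2*(j+1)) * (1 - PowerSeries.C (z*q) * X) * rescale (q^2) (Aps z q j)
      * rescale (q^2) (Pps q j)) * K2 z q j

noncomputable def SJ (z q : K) (J : ℕ) : PowerSeries K := ∑ j ∈ range J, gps z q j

lemma SJ_succ (J : ℕ) : SJ z q (J+1) = SJ z q J + gps z q J := by
  rw [SJ, SJ, sum_range_succ]

lemma Aps_zero : Aps z q 0 = 1 := by
  ext n
  rw [Aps, coeff_mk, coeff_one]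
  cases n with
  | zero => simp [ca, gb_zero]
  | succ n => simp [ca, gb_of_lt (q^2) (Nat.succ_pos n)]

lemma Bps_zero : Bps z q 0 = 1 := by
  ext n
  rw [Bps, coeff_mk, coeff_one]
  cases n with
  | zero => simp [cb, gb_zero]
  | succ n => simp [cb, gb_of_lt (q^2) (Nat.succ_pos n)]

lemma gps_zero : gps z q 0 = Pps q 0 := by
  rw [gps, Aps_zero, Bps_zero]
  simp

lemma cp_zero (m : ℕ) : cp q 0 m = if m % 2 = 0 then 1 else 0 := by
  rw [cp]
  simp [gb_zero]

lemma one_sub_X2_mul_Pps_zero : (1 - X^2) * Pps q 0 = 1 := by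
  ext n
  rw [coeff_one_sub_X2_mul, Pps, coeff_mk, coeff_mk, coeff_one, cp_zero, cp_zero]
  match n with
  | 0 => norm_num
  | 1 => norm_num
  | (m+2) =>
    rw [if_pos (by omega : (2:ℕ) ≤ m+2), show m+2-2 = m from by omega,
      if_neg (by omega : ¬ m+2 = 0)]
    have : (m+2) % 2 = m % 2 := by omega
    rw [this]
    ring

lemma EqJ : ∀ J : ℕ, (1 - X^2) * ((1 - PowerSeries.C (q^2) * X^2) * SJ z q (J+1))
    = PowerSeries.C (q^2) * (X^2 * ((1 - PowerSeries.C (z*q) * X) *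
        ((1 - PowerSeries.C (z⁻¹*q) * X) * rescale (q^2) (SJ z q J))))
      + (1 - PowerSeries.C (q^2) * X^2) := by
  intro J
  induction J with
  | zero =>
    rw [SJ, SJ, sum_range_one, sum_range_zero, map_zero, gps_zero]
    rw [mul_left_comm, one_sub_X2_mul_Pps_zero]
    simp
  | succ J ih =>
    rw [SJ_succ z q (J+1), SJ_succ z q J, map_add]
    rw [SJ_succ z q J] at ih
    linear_combination ih + K4 z q J

lemma coeff_gps_of_lt (n j : ℕ) (h : n < 2*j) : coeff n (gps z q j) = 0 := by
  rw [gps, coeff_C_mul, coeff_X_pow_mul', if_neg (by omega), mul_zero]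

noncomputable def phi (z q : K) (n : ℕ) : K := coeff n (SJ z q (n+1))

lemma coeff_SJ_eq (n : ℕ) : ∀ J : ℕ, n < 2*J → coeff n (SJ z q J) = phi z q n := by
  have base : ∀ J M : ℕ, J ≤ M → n < 2*J →
      (coeff n) (SJ z q J) = ∑ j ∈ range M, (coeff n) (gps z q j) := by
    intro J M hJM hJ
    rw [SJ, map_sum]
    apply Finset.sum_subset (range_subset_range.mpr hJM)
    intro j hj hnj
    simp only [mem_range, not_lt] at hj hnj
    exact coeff_gps_of_lt z q n j (by omega)
  intro J hJ
  rw [phi, base J (J+n+1) (by omega) hJ, base (n+1) (J+n+1) (by omega) (by omega)]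

lemma coeff_one_sub_CX_mul (c : K) (F : PowerSeries K) (m : ℕ) :
    coeff m ((1 - PowerSeries.C c * X) * F)
      = coeff m F - c * (if 1 ≤ m then coeff (m-1) F else 0) := by
  have : (X : PowerSeries K) = X^1 := (pow_one _).symm
  rw [sub_mul, one_mul, map_sub, mul_assoc, coeff_C_mul, this, coeff_X_pow_mul']

lemma PhiEqN (hz : z ≠ 0) (k : ℕ) :
    phi z q (k+4) = (1+q^2) * phi z q (k+2) - q^2 * phi z q k
      + q^2*(q^2)^(k+2) * phi z q (k+2) - (z+z⁻¹)*q^3*(q^2)^(k+1) * phi z q (k+1)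
      + q^4*(q^2)^k * phi z q k := by
  have hzz : z * z⁻¹ = 1 := mul_inv_cancel₀ hz
  have E := congrArg (coeff (k+4)) (EqJ z q (k+4))
  rw [coeff_one_sub_X2_mul, coeff_one_sub_CX2_mul,
    if_pos (show (2:ℕ) ≤ k+4 by omega), show k+4-2 = k+2 from by omega,
    coeff_one_sub_CX2_mul, if_pos (show (2:ℕ) ≤ k+2 by omega),
    show k+2-2 = k from by omega, map_add, coeff_C_mul, coeff_X_pow_mul',
    if_pos (show (2:ℕ) ≤ k+4 by omega), show k+4-2 = k+2 from by omega,
    coeff_one_sub_CX_mul, if_pos (show (1:ℕ) ≤ k+2 by omega),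
    show k+2-1 = k+1 from by omega,
    coeff_one_sub_CX_mul, if_pos (show (1:ℕ) ≤ k+2 by omega),
    show k+2-1 = k+1 from by omega,
    coeff_one_sub_CX_mul, if_pos (show (1:ℕ) ≤ k+1 by omega),
    show k+1-1 = k from by omega,
    coeff_rescale, coeff_rescale, coeff_rescale,
    map_sub, coeff_one, if_neg (show ¬ (k+4 = 0) by omega), coeff_C_mul,
    coeff_X_pow, if_neg (show ¬ (k+4 = 2) by omega),
    coeff_SJ_eq z q (k+4) (k+4+1) (by omega),
    coeff_SJ_eq z q (k+2) (k+4+1) (by omega),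
    coeff_SJ_eq z q k (k+4+1) (by omega),
    coeff_SJ_eq z q (k+2) (k+4) (by omega),
    coeff_SJ_eq z q (k+1) (k+4) (by omega),
    coeff_SJ_eq z q k (k+4) (by omega)] at E
  rw [if_pos (show (2:ℕ) ≤ k+4 by omega)] at E
  linear_combination E + (q^4*(q^2)^k * phi z q k) * hzz

lemma PhiEq3 (hz : z ≠ 0) :
    phi z q 3 = (1+q^2) * phi z q 1 + q^2*(q^2)^1 * phi z q 1
      - (z+z⁻¹)*q^3*(q^2)^0 * phi z q 0 := by
  have hzz : z * z⁻¹ = 1 := mul_inv_cancel₀ hz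
  have E := congrArg (coeff 3) (EqJ z q 3)
  rw [coeff_one_sub_X2_mul, coeff_one_sub_CX2_mul,
    if_pos (show (2:ℕ) ≤ 3 by omega), show 3-2 = 1 from by omega,
    coeff_one_sub_CX2_mul, if_neg (show ¬ (2:ℕ) ≤ 1 by omega),
    map_add, coeff_C_mul, coeff_X_pow_mul',
    if_pos (show (2:ℕ) ≤ 3 by omega), show 3-2 = 1 from by omega,
    coeff_one_sub_CX_mul, if_pos (show (1:ℕ) ≤ 1 by omega),
    show 1-1 = 0 from by omega,
    coeff_one_sub_CX_mul, if_pos (show (1:ℕ) ≤ 1 by omega),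
    show 1-1 = 0 from by omega,
    coeff_one_sub_CX_mul, if_neg (show ¬ (1:ℕ) ≤ 0 by omega),
    coeff_rescale, coeff_rescale,
    map_sub, coeff_one, if_neg (show ¬ (3 = 0) by omega), coeff_C_mul,
    coeff_X_pow, if_neg (show ¬ (3 = 2) by omega),
    coeff_SJ_eq z q 3 4 (by omega),
    coeff_SJ_eq z q 1 4 (by omega),
    coeff_SJ_eq z q 1 3 (by omega),
    coeff_SJ_eq z q 0 3 (by omega)] at E
  rw [if_pos (show (2:ℕ) ≤ 3 by omega)] at E
  linear_combination E

lemma coeff_mul_range (F G : PowerSeries K) (m : ℕ) :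
    coeff m (F * G) = ∑ u ∈ range (m+1), coeff u F * coeff (m-u) G := by
  rw [coeff_mul, Finset.Nat.sum_antidiagonal_eq_sum_range_succ_mk]

lemma cg_formula (j m : ℕ) :
    coeff m (Aps z q j * (Bps z q j * Pps q j))
      = ∑ h ∈ range (m+1), ca z q j h * ∑ i ∈ range (m-h+1), cb z q j i * cp q j (m-h-i) := by
  rw [coeff_mul_range]
  refine sum_congr rfl fun h _ => ?_
  rw [Aps, coeff_mk, coeff_mul_range]
  congr 1
  refine sum_congr rfl fun i _ => ?_
  rw [Bps, coeff_mk, Pps, coeff_mk]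

lemma ca_of_lt (j h : ℕ) (hh : j < h) : ca z q j h = 0 := by
  rw [ca, gb_of_lt _ hh]; ring

lemma cb_of_lt (j i : ℕ) (hi : j < i) : cb z q j i = 0 := by
  rw [cb, gb_of_lt _ hi]; ring

lemma zsplit (hz : z ≠ 0) (h i : ℕ) : z^((h:ℤ) - (i:ℤ)) = z^h * (z⁻¹)^i := by
  rw [zpow_sub₀ hz, zpow_natCast, zpow_natCast, div_eq_mul_inv, inv_pow]

/-- reshape the convolution double sum to a big square with guards -/
lemma R1 (j m L : ℕ) (hm : m + 1 ≤ L) :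
    (∑ h ∈ range (m+1), ca z q j h * ∑ i ∈ range (m-h+1), cb z q j i * cp q j (m-h-i))
      = ∑ h ∈ range L, ∑ i ∈ range L,
          ca z q j h * (cb z q j i * (if h+i ≤ m then cp q j (m-h-i) else 0)) := by
  have step1 : ∀ h, h ≤ m →
      (ca z q j h * ∑ i ∈ range (m-h+1), cb z q j i * cp q j (m-h-i))
        = ∑ i ∈ range L, ca z q j h * (cb z q j i * (if h+i ≤ m then cp q j (m-h-i) else 0)) := by
    intro h hh
    rw [mul_sum]
    refine (sum_subset (range_subset_range.mpr (show m-h+1 ≤ L by omega)) ?_).symm.trans ?_ |>.symm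
    · intro i _ hi
      simp only [mem_range, not_lt] at hi
      rw [if_neg (by omega), mul_zero, mul_zero]
    · refine sum_congr rfl fun i hi => ?_
      simp only [mem_range] at hi
      rw [if_pos (by omega)]
  calc (∑ h ∈ range (m+1), ca z q j h * ∑ i ∈ range (m-h+1), cb z q j i * cp q j (m-h-i))
      = ∑ h ∈ range (m+1), ∑ i ∈ range L,
          ca z q j h * (cb z q j i * (if h+i ≤ m then cp q j (m-h-i) else 0)) := by
        refine sum_congr rfl fun h hh => ?_
        simp only [mem_range] at hh
        exact step1 h (by omega)
    _ = _ := by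
        refine sum_subset (range_subset_range.mpr (by omega)) ?_
        intro h _ hh
        simp only [mem_range, not_lt] at hh
        refine sum_eq_zero fun i _ => ?_
        rw [if_neg (by omega), mul_zero, mul_zero]

/-- extend the (j+1)-square to the L-square -/
lemma R2 (j n L : ℕ) (hL : j + 1 ≤ L) (f : ℕ → ℕ → K) :
    (∑ h ∈ range (j+1), ∑ i ∈ range (j+1),
        ca z q j h * (cb z q j i * f h i))
      = ∑ h ∈ range L, ∑ i ∈ range L, ca z q j h * (cb z q j i * f h i) := by
  have inner : ∀ h, (∑ i ∈ range (j+1), ca z q j h * (cb z q j i * f h i))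
      = ∑ i ∈ range L, ca z q j h * (cb z q j i * f h i) := by
    intro h
    refine sum_subset (range_subset_range.mpr hL) fun i _ hi => ?_
    simp only [mem_range, not_lt] at hi
    rw [cb_of_lt z q j i (by omega), zero_mul, mul_zero]
  calc (∑ h ∈ range (j+1), ∑ i ∈ range (j+1), ca z q j h * (cb z q j i * f h i))
      = ∑ h ∈ range (j+1), ∑ i ∈ range L, ca z q j h * (cb z q j i * f h i) :=
        sum_congr rfl fun h _ => inner h
    _ = _ := by
        refine sum_subset (range_subset_range.mpr hL) fun h _ hh => ?_
        simp only [mem_range, not_lt] at hh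
        refine sum_eq_zero fun i _ => ?_
        rw [ca_of_lt z q j h (by omega), zero_mul]

/-- pointwise identity, case `2j+1 ≤ n` -/
lemma PW1 (hz : z ≠ 0) (j n h i : ℕ) (h2j : 2*j ≤ n) (h3 : 2*j+1 ≤ n) :
    (-1 : K)^(h+i) * z^((h:ℤ) - (i:ℤ)) * q^(h^2+i^2+2*j^2) * gb (q^2) j h * gb (q^2) j i *
        gb (q^2) (j + (n-h-i)/2) (2*j)
      = q^(2*j^2) * (ca z q j h * (cb z q j i * (if h+i ≤ n-2*j then cp q j (n-2*j-h-i) else 0)))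
        + q^(2*j^2) * (ca z q j h * (cb z q j i *
            (if h+i ≤ n-2*j-1 then cp q j (n-2*j-1-h-i) else 0))) := by
  by_cases hh : h ≤ j
  swap
  · rw [gb_of_lt (q^2) (show j < h by omega), ca_of_lt z q j h (by omega)]; ring
  by_cases hi : i ≤ j
  swap
  · rw [gb_of_lt (q^2) (show j < i by omega), cb_of_lt z q j i (by omega)]; ring
  by_cases hm : h + i ≤ n - 2*j
  · rcases Nat.even_or_odd (n - 2*j - h - i) with hev | hod
    · have hev' := Nat.even_iff.mp hev
      have c1 : cp q j (n-2*j-h-i) = gb (q^2) ((n-2*j-h-i)/2 + 2*j) (2*j) := by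
        rw [cp, if_pos hev']
      have hidx : (n-2*j-h-i)/2 + 2*j = j + (n-h-i)/2 := by omega
      have c2 : (if h+i ≤ n-2*j-1 then cp q j (n-2*j-1-h-i) else 0) = (0:K) := by
        by_cases h0 : h + i ≤ n - 2*j - 1
        · rw [if_pos h0, cp, if_neg (by omega)]
        · rw [if_neg h0]
      rw [if_pos hm, c1, hidx, c2, ca, cb, zsplit z hz]
      ring
    · have hod' := Nat.odd_iff.mp hod
      have c1 : cp q j (n-2*j-h-i) = 0 := by rw [cp, if_neg (by omega)]
      have c2 : cp q j (n-2*j-1-h-i) = gb (q^2) ((n-2*j-1-h-i)/2 + 2*j) (2*j) := by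
        rw [cp, if_pos (by omega)]
      have hidx : (n-2*j-1-h-i)/2 + 2*j = j + (n-h-i)/2 := by omega
      rw [if_pos hm, if_pos (by omega : h+i ≤ n-2*j-1), c1, c2, hidx, ca, cb, zsplit z hz]
      ring
  · have hgb : gb (q^2) (j + (n-h-i)/2) (2*j) = 0 :=
      gb_of_lt (q^2) (by omega)
    rw [hgb, if_neg hm, if_neg (by omega : ¬ h+i ≤ n-2*j-1)]
    ring

/-- pointwise identity, case `n = 2j` -/
lemma PW2 (hz : z ≠ 0) (j h i : ℕ) :
    (-1 : K)^(h+i) * z^((h:ℤ) - (i:ℤ)) * q^(h^2+i^2+2*j^2) * gb (q^2) j h * gb (q^2) j i *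
        gb (q^2) (j + (2*j-h-i)/2) (2*j)
      = q^(2*j^2) * (ca z q j h * (cb z q j i *
          (if h+i ≤ 2*j-2*j then cp q j (2*j-2*j-h-i) else 0))) := by
  by_cases hh : h ≤ j
  swap
  · rw [gb_of_lt (q^2) (show j < h by omega), ca_of_lt z q j h (by omega)]; ring
  by_cases hi : i ≤ j
  swap
  · rw [gb_of_lt (q^2) (show j < i by omega), cb_of_lt z q j i (by omega)]; ring
  by_cases hm : h + i = 0
  · have hh0 : h = 0 := by omega
    have hi0 : i = 0 := by omega
    subst hh0; subst hi0
    rw [if_pos (by omega), show 2*j-2*j-0-0 = 0+0 from by omega, cp_even,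
      show (2*j-0-0)/2 = j from by omega, show (0:ℕ)+2*j = j+j from by omega,
      show j+j = 2*j from by omega]
    rw [ca, cb, zsplit z hz]
    ring
  · have hgb : gb (q^2) (j + (2*j-h-i)/2) (2*j) = 0 := gb_of_lt (q^2) (by omega)
    rw [hgb, if_neg (by omega)]
    ring

lemma inner_eq (hz : z ≠ 0) (j n : ℕ) (hn : 1 ≤ n) :
    (∑ h ∈ range (j+1), ∑ i ∈ range (j+1),
      (-1 : K)^(h+i) * z^((h:ℤ) - (i:ℤ)) * q^(h^2+i^2+2*j^2) * gb (q^2) j h * gb (q^2) j i *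
        gb (q^2) (j + (n-h-i)/2) (2*j))
      = coeff n (gps z q j) + coeff (n-1) (gps z q j) := by
  rcases lt_or_ge n (2*j) with h2j | h2j
  · rw [coeff_gps_of_lt z q n j h2j, coeff_gps_of_lt z q (n-1) j (by omega), add_zero]
    refine sum_eq_zero fun h _ => sum_eq_zero fun i _ => ?_
    rw [gb_of_lt (q^2) (show j + (n-h-i)/2 < 2*j by omega), mul_zero]
  have e1 : coeff n (gps z q j)
      = q^(2*j^2) * coeff (n-2*j) (Aps z q j * (Bps z q j * Pps q j)) := by
    rw [gps, coeff_C_mul, coeff_X_pow_mul', if_pos h2j]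
  rcases le_or_gt (2*j+1) n with h3 | h3
  · have e2 : coeff (n-1) (gps z q j)
        = q^(2*j^2) * coeff (n-2*j-1) (Aps z q j * (Bps z q j * Pps q j)) := by
      rw [gps, coeff_C_mul, coeff_X_pow_mul', if_pos (by omega),
        show n-1-2*j = n-2*j-1 from by omega]
    rw [e1, e2, cg_formula, cg_formula,
      R1 z q j (n-2*j) (n+j+2) (by omega), R1 z q j (n-2*j-1) (n+j+2) (by omega)]
    calc (∑ h ∈ range (j+1), ∑ i ∈ range (j+1),
          (-1 : K)^(h+i) * z^((h:ℤ) - (i:ℤ)) * q^(h^2+i^2+2*j^2) * gb (q^2) j h * gb (q^2) j i *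
            gb (q^2) (j + (n-h-i)/2) (2*j))
        = ∑ h ∈ range (j+1), ∑ i ∈ range (j+1),
            (q^(2*j^2) * (ca z q j h * (cb z q j i *
                (if h+i ≤ n-2*j then cp q j (n-2*j-h-i) else 0)))
              + q^(2*j^2) * (ca z q j h * (cb z q j i *
                (if h+i ≤ n-2*j-1 then cp q j (n-2*j-1-h-i) else 0)))) :=
          sum_congr rfl fun h _ => sum_congr rfl fun i _ => PW1 z q hz j n h i h2j h3
      _ = (∑ h ∈ range (j+1), ∑ i ∈ range (j+1),
            q^(2*j^2) * (ca z q j h * (cb z q j i *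
                (if h+i ≤ n-2*j then cp q j (n-2*j-h-i) else 0))))
          + ∑ h ∈ range (j+1), ∑ i ∈ range (j+1),
            q^(2*j^2) * (ca z q j h * (cb z q j i *
                (if h+i ≤ n-2*j-1 then cp q j (n-2*j-1-h-i) else 0))) := by
          simp only [sum_add_distrib]
      _ = q^(2*j^2) * (∑ h ∈ range (j+1), ∑ i ∈ range (j+1),
            ca z q j h * (cb z q j i * (if h+i ≤ n-2*j then cp q j (n-2*j-h-i) else 0)))
          + q^(2*j^2) * (∑ h ∈ range (j+1), ∑ i ∈ range (j+1),
            ca z q j h * (cb z q j i * (if h+i ≤ n-2*j-1 then cp q j (n-2*j-1-h-i) else 0))) := by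
          simp only [mul_sum]
      _ = _ := by
          rw [R2 z q j n (n+j+2) (by omega), R2 z q j n (n+j+2) (by omega)]
  · obtain rfl : n = 2*j := by omega
    rw [coeff_gps_of_lt z q (2*j-1) j (by omega), add_zero, e1, cg_formula,
      R1 z q j (2*j-2*j) (2*j+j+2) (by omega)]
    calc (∑ h ∈ range (j+1), ∑ i ∈ range (j+1),
          (-1 : K)^(h+i) * z^((h:ℤ) - (i:ℤ)) * q^(h^2+i^2+2*j^2) * gb (q^2) j h * gb (q^2) j i *
            gb (q^2) (j + (2*j-h-i)/2) (2*j))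
        = ∑ h ∈ range (j+1), ∑ i ∈ range (j+1),
            q^(2*j^2) * (ca z q j h * (cb z q j i *
                (if h+i ≤ 2*j-2*j then cp q j (2*j-2*j-h-i) else 0))) :=
          sum_congr rfl fun h _ => sum_congr rfl fun i _ => PW2 z q hz j h i
      _ = q^(2*j^2) * (∑ h ∈ range (j+1), ∑ i ∈ range (j+1),
            ca z q j h * (cb z q j i * (if h+i ≤ 2*j-2*j then cp q j (2*j-2*j-h-i) else 0))) := by
          simp only [mul_sum]
      _ = _ := by
          rw [R2 z q j (2*j) (2*j+j+2) (by omega)]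

lemma M1 (hz : z ≠ 0) (n : ℕ) (hn : 1 ≤ n) : S1 z q n = phi z q n + phi z q (n-1) := by
  have hphi : phi z q n = ∑ j ∈ range (n+1), coeff n (gps z q j) := by
    rw [phi, SJ, map_sum]
  have hphi' : phi z q (n-1) = ∑ j ∈ range (n+1), coeff (n-1) (gps z q j) := by
    rw [phi, SJ, map_sum]
    refine sum_subset (range_subset_range.mpr (by omega)) fun j _ hj => ?_
    simp only [mem_range, not_lt] at hj
    exact coeff_gps_of_lt z q (n-1) j (by omega)
  rw [S1, hphi, hphi', ← sum_add_distrib]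
  refine (sum_subset (range_subset_range.mpr (by omega)) ?_).trans
    (sum_congr rfl fun j _ => inner_eq z q hz j n hn)
  intro j _ hj
  simp only [mem_range, not_lt] at hj
  refine sum_eq_zero fun h _ => sum_eq_zero fun i _ => ?_
  rw [gb_of_lt (q^2) (show j + (n-h-i)/2 < 2*j by omega), mul_zero]

lemma phi_zero : phi z q 0 = 1 := by
  rw [phi, SJ, sum_range_one, gps_zero, Pps, coeff_mk, cp_zero]
  norm_num

lemma S1_zero' : S1 z q 0 = phi z q 0 := by
  rw [phi_zero, S1]
  simp [gb_zero]

lemma M1' (hz : z ≠ 0) (n : ℕ) : S1 z q (n+1) = phi z q (n+1) + phi z q n := by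
  have h := M1 z q hz (n+1) (by omega)
  rwa [show n+1-1 = n from by omega] at h

lemma phi_one : phi z q 1 = 0 := by
  rw [phi, SJ, sum_range_succ, sum_range_one, map_add, gps_zero, Pps, coeff_mk,
    coeff_gps_of_lt z q 1 1 (by omega), cp_zero]
  norm_num

lemma phi_two : phi z q 2 = 1 + q^2 := by
  rw [phi, SJ, sum_range_succ, sum_range_succ, sum_range_one, map_add, map_add,
    gps_zero, Pps, coeff_mk, coeff_gps_of_lt z q 2 2 (by omega), cp_zero]
  have h1 : coeff 2 (gps z q 1) = q^2 := by
    rw [gps, coeff_C_mul, coeff_X_pow_mul', if_pos (by omega : 2*1 ≤ 2),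
      show 2-2*1 = 0 from by omega, cg_formula, sum_range_one, sum_range_one]
    norm_num [ca, cb, cp, gb_zero]
    rw [gb_self]
    norm_num
  rw [h1]
  norm_num

lemma phi_three : phi z q 3 = -(z+z⁻¹) * q^3 := by
  rw [phi, SJ, sum_range_succ, sum_range_succ, sum_range_succ, sum_range_one,
    map_add, map_add, map_add, gps_zero, Pps, coeff_mk,
    coeff_gps_of_lt z q 3 2 (by omega), coeff_gps_of_lt z q 3 3 (by omega), cp_zero]
  have h1 : coeff 3 (gps z q 1) = -(z+z⁻¹) * q^3 := by
    rw [gps, coeff_C_mul, coeff_X_pow_mul', if_pos (by omega : 2*1 ≤ 3),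
      show 3-2*1 = 1 from by omega, cg_formula]
    rw [show (1:ℕ)+1 = 2 from rfl, sum_range_succ, sum_range_one,
      show (1:ℕ)-0+1 = 2 from rfl, sum_range_succ, sum_range_one,
      show (1:ℕ)-1+1 = 1 from rfl, sum_range_one]
    norm_num [ca, cb, cp, gb_zero]
    rw [gb_self, gb_self]
    ring
  rw [h1]
  norm_num

end MS1

/-- The triple sum `S_n(z,q)` (the left side of McLaughlin–Sills Identity 1)
satisfies the fourth-order recurrence (for `n ≥ 4`)
`S_n = (1-q²)S_{n-1} + (2q²+q^{2n-2})S_{n-2} + (q⁴-q²-(z+z⁻¹)q^{2n-3})S_{n-3}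
      + (q^{2n-4}-q⁴)S_{n-4}`,
with initial conditions `S_0 = S_1 = 1`, `S_2 = 1+q²`, `S_3 = 1+q²-(z+z⁻¹)q³`. -/

theorem S1_recurrence_and_initial {K : Type*} [Field K] (z q : K)
    (hz : z ≠ 0) (hq : q ≠ 0) :
    (∀ n : ℕ, 4 ≤ n →
      S1 z q n =
        (1 - q^2) * S1 z q (n-1) + (2*q^2 + q^(2*n-2)) * S1 z q (n-2)
          + (q^4 - q^2 - (z + z⁻¹) * q^(2*n-3)) * S1 z q (n-3)
          + (q^(2*n-4) - q^4) * S1 z q (n-4)) ∧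
    S1 z q 0 = 1 ∧ S1 z q 1 = 1 ∧ S1 z q 2 = 1 + q^2 ∧
      S1 z q 3 = 1 + q^2 - (z + z⁻¹) * q^3 := by
  refine ⟨?_, ?_, ?_, ?_, ?_⟩
  · intro n hn
    obtain ⟨m, rfl⟩ : ∃ m, n = m + 4 := ⟨n - 4, by omega⟩
    match m with
    | 0 =>
      have e4 : S1 z q 4 = MS1.phi z q 4 + MS1.phi z q 3 := by
        have h := MS1.M1' z q hz 3; norm_num at h; exact h
      have e3 : S1 z q 3 = MS1.phi z q 3 + MS1.phi z q 2 := by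
        have h := MS1.M1' z q hz 2; norm_num at h; exact h
      have e2 : S1 z q 2 = MS1.phi z q 2 + MS1.phi z q 1 := by
        have h := MS1.M1' z q hz 1; norm_num at h; exact h
      have e1 : S1 z q 1 = MS1.phi z q 1 + MS1.phi z q 0 := by
        have h := MS1.M1' z q hz 0; norm_num at h; exact h
      have e0 : S1 z q 0 = MS1.phi z q 0 := MS1.S1_zero' z q
      have E4 := MS1.PhiEqN z q hz 0
      have E3 := MS1.PhiEq3 z q hz
      norm_num at E4 E3 ⊢
      rw [e4, e3, e2, e1]
      linear_combination E4 + q^2 * E3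
    | (m+1) =>
      simp only [show m+1+4 = m+5 from by omega, show m+5-1 = m+4 from by omega,
        show m+5-2 = m+3 from by omega, show m+5-3 = m+2 from by omega,
        show m+5-4 = m+1 from by omega, show 2*(m+5)-2 = 2*m+8 from by omega,
        show 2*(m+5)-3 = 2*m+7 from by omega, show 2*(m+5)-4 = 2*m+6 from by omega]
      have e5 : S1 z q (m+5) = MS1.phi z q (m+5) + MS1.phi z q (m+4) := by
        have h := MS1.M1' z q hz (m+4)
        rwa [show m+4+1 = m+5 from by omega] at h
      have e4 : S1 z q (m+4) = MS1.phi z q (m+4) + MS1.phi z q (m+3) := by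
        have h := MS1.M1' z q hz (m+3)
        rwa [show m+3+1 = m+4 from by omega] at h
      have e3 : S1 z q (m+3) = MS1.phi z q (m+3) + MS1.phi z q (m+2) := by
        have h := MS1.M1' z q hz (m+2)
        rwa [show m+2+1 = m+3 from by omega] at h
      have e2 : S1 z q (m+2) = MS1.phi z q (m+2) + MS1.phi z q (m+1) := by
        have h := MS1.M1' z q hz (m+1)
        rwa [show m+1+1 = m+2 from by omega] at h
      have e1 : S1 z q (m+1) = MS1.phi z q (m+1) + MS1.phi z q m := by
        have h := MS1.M1' z q hz m
        exact h
      have E1 := MS1.PhiEqN z q hz (m+1)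
      have E2 := MS1.PhiEqN z q hz m
      rw [show m+1+4 = m+5 from by omega, show m+1+2 = m+3 from by omega,
        show m+1+1 = m+2 from by omega] at E1
      rw [e5, e4, e3, e2, e1]
      linear_combination E1 + q^2 * E2
  · rw [MS1.S1_zero', MS1.phi_zero]
  · have h := MS1.M1' z q hz 0
    norm_num at h
    rw [h, MS1.phi_one, MS1.phi_zero]
    norm_num
  · have h := MS1.M1' z q hz 1
    norm_num at h
    rw [h, MS1.phi_two, MS1.phi_one]
    ring
  · have h := MS1.M1' z q hz 2
    norm_num at h
    rw [h, MS1.phi_three, MS1.phi_two]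
    ring
end
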